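/- arXiv:2512.15854 — 12 statements merged into one kernel-verified Lean document; each statement's English description precedes it below -/
import Mathlib

section
/- Let d ≥ 1 and Ω ≥ 1 be natural numbers, and let μ be a probability measure on the space of Ω-tuples of vectors, Fin Ω → EuclideanSpace ℂ (Fin d), which is absolutely continuous with respect to the Lebesgue (volume) measure on that space. Then for μ-almost every tuple v, the rank of the Ω × Ω Gram matrix G with entries G i j = ⟪v i, v j⟫ equals min Ω d. -/
open MeasureTheory

noncomputable instance (d : ℕ) : MeasurableSpace (EuclideanSpace ℂ (Fin d)) := borel _

instance (d : ℕ) : BorelSpace (EuclideanSpace ℂ (Fin d)) := ⟨rfl⟩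

/-- The Gram matrix of a tuple of vectors in a complex inner product space. -/
noncomputable def gramMatrix {d Ω : ℕ} (v : Fin Ω → EuclideanSpace ℂ (Fin d)) :
    Matrix (Fin Ω) (Fin Ω) ℂ :=
  Matrix.of fun i j => (inner ℂ (v i) (v j) : ℂ)

open Matrix
open scoped ComplexOrder

namespace GramAux

variable {d n : ℕ}

lemma gram_mulVec (w : Fin n → EuclideanSpace ℂ (Fin d)) (c : Fin n → ℂ) (i : Fin n) :
    (gramMatrix w).mulVec c i = (inner ℂ (w i) (∑ j, c j • w j) : ℂ) := by
  simp [Matrix.mulVec, dotProduct, gramMatrix, inner_sum, inner_smul_right, mul_comm]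

lemma det_gram_eq_zero_iff (w : Fin n → EuclideanSpace ℂ (Fin d)) :
    (gramMatrix w).det = 0 ↔ ¬ LinearIndependent ℂ w := by
  constructor
  · intro h hLI
    obtain ⟨c, hc0, hc⟩ := (Matrix.exists_mulVec_eq_zero_iff).mpr h
    have h1 : ∀ i, (inner ℂ (w i) (∑ j, c j • w j) : ℂ) = 0 := fun i => by
      rw [← gram_mulVec]; rw [hc]; rfl
    have h2 : (∑ j, c j • w j) = 0 := by
      have : (inner ℂ (∑ j, c j • w j) (∑ j, c j • w j) : ℂ) = 0 := by
        rw [sum_inner]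
        simp [inner_smul_left, h1]
      exact inner_self_eq_zero.mp this
    exact hc0 (funext (Fintype.linearIndependent_iff.mp hLI c h2))
  · intro h
    rw [← Matrix.exists_mulVec_eq_zero_iff]
    rw [Fintype.linearIndependent_iff] at h
    push_neg at h
    obtain ⟨c, hsum, i, hi⟩ := h
    refine ⟨c, fun hc => hi (congrFun hc i), funext fun i => ?_⟩
    rw [gram_mulVec, hsum, inner_zero_right]; rfl

lemma measurableSet_dep :
    MeasurableSet {w : Fin n → EuclideanSpace ℂ (Fin d) | ¬ LinearIndependent ℂ w} := by
  have hset : {w : Fin n → EuclideanSpace ℂ (Fin d) | ¬ LinearIndependent ℂ w}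
      = (fun w : Fin n → EuclideanSpace ℂ (Fin d) => (gramMatrix w).det) ⁻¹' {0} := by
    ext w
    simp [det_gram_eq_zero_iff]
  have hcont : Continuous fun w : Fin n → EuclideanSpace ℂ (Fin d) => (gramMatrix w).det := by
    have hg : Continuous fun w : Fin n → EuclideanSpace ℂ (Fin d) => gramMatrix w := by
      apply continuous_matrix
      intro i j
      exact (continuous_apply i).inner (𝕜 := ℂ) (E := EuclideanSpace ℂ (Fin d))
        (continuous_apply j)
    exact hg.matrix_det
  rw [hset]
  exact hcont.measurable (measurableSet_singleton 0)

lemma span_ne_top (hn : n < d) (w : Fin n → EuclideanSpace ℂ (Fin d)) :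
    (Submodule.span ℂ (Set.range w)).restrictScalars ℝ ≠ ⊤ := by
  intro htop
  have htop' : Submodule.span ℂ (Set.range w) = ⊤ := by
    rw [Submodule.eq_top_iff'] at htop ⊢
    exact htop
  have h1 : Module.finrank ℂ (Submodule.span ℂ (Set.range w)) ≤ n := by
    simpa [Set.finrank] using finrank_range_le_card (R := ℂ) w
  rw [htop'] at h1
  have h2 : Module.finrank ℂ (⊤ : Submodule ℂ (EuclideanSpace ℂ (Fin d)))
      = d := by
    rw [finrank_top]
    simp [finrank_euclideanSpace]
  omega

lemma volume_dep_eq_zero (hn : n ≤ d) :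
    volume {w : Fin n → EuclideanSpace ℂ (Fin d) | ¬ LinearIndependent ℂ w} = 0 := by
  induction n with
  | zero =>
      have : {w : Fin 0 → EuclideanSpace ℂ (Fin d) | ¬ LinearIndependent ℂ w} = ∅ := by
        ext w
        simp [linearIndependent_empty_type]
      rw [this, measure_empty]
  | succ n ih =>
      have hn' : n ≤ d := Nat.le_of_succ_le hn
      set D : Set (Fin (n + 1) → EuclideanSpace ℂ (Fin d)) :=
        {w | ¬ LinearIndependent ℂ w} with hDdef
      have hD : MeasurableSet D := measurableSet_dep
      set e := MeasurableEquiv.piFinSuccAbove (fun _ : Fin (n + 1) => EuclideanSpace ℂ (Fin d))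
        (Fin.last n) with he
      have mp := volume_preserving_piFinSuccAbove
        (fun _ : Fin (n + 1) => EuclideanSpace ℂ (Fin d)) (Fin.last n)
      have hS : MeasurableSet (e.symm ⁻¹' D) := e.symm.measurable hD
      have key : (volume : Measure (EuclideanSpace ℂ (Fin d) ×
          (Fin n → EuclideanSpace ℂ (Fin d)))) (e.symm ⁻¹' D) = 0 := by
        rw [Measure.volume_eq_prod, ← Measure.prod_swap,
          Measure.map_apply measurable_swap hS]
        rw [Measure.measure_prod_null (measurable_swap hS)]
        have hae : ∀ᵐ w : Fin n → EuclideanSpace ℂ (Fin d) ∂volume,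
            LinearIndependent ℂ w := by
          rw [ae_iff]
          simpa using ih hn'
        filter_upwards [hae] with w hw
        have hsub : (Prod.mk w ⁻¹' (Prod.swap ⁻¹' (e.symm ⁻¹' D)))
            ⊆ ((Submodule.span ℂ (Set.range w)).restrictScalars ℝ : Set (EuclideanSpace ℂ (Fin d))) := by
          intro x hx
          have hx' : e.symm (x, w) ∈ D := hx
          have hval : e.symm (x, w) = Fin.snoc w x := by
            show (Fin.insertNthEquiv (fun _ : Fin (n+1) => EuclideanSpace ℂ (Fin d)) (Fin.last n))
              (x, w) = Fin.snoc w x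
            simp [Fin.insertNthEquiv]
          rw [hval] at hx'
          have : ¬ LinearIndependent ℂ (Fin.snoc w x : Fin (n+1) → EuclideanSpace ℂ (Fin d)) := hx'
          rw [linearIndependent_fin_snoc] at this
          push_neg at this
          exact this hw
        refine measure_mono_null hsub ?_
        exact Measure.addHaar_submodule _ _ (span_ne_top (Nat.lt_of_succ_le hn) w)
      have := (mp.symm e).measure_preimage hD.nullMeasurableSet
      rw [← this]
      exact key

end GramAux

theorem gram_rank_ae_min (d Ω : ℕ) (hd : 1 ≤ d) (hΩ : 1 ≤ Ω)
    (μ : Measure (Fin Ω → EuclideanSpace ℂ (Fin d))) [IsProbabilityMeasure μ]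
    (hμ : μ ≪ (volume : Measure (Fin Ω → EuclideanSpace ℂ (Fin d)))) :
    ∀ᵐ v ∂μ, (gramMatrix v).rank = min Ω d := by
  classical
  set m := min Ω d with hm
  have hmΩ : m ≤ Ω := min_le_left _ _
  have hmd : m ≤ d := min_le_right _ _
  -- the null cylinder set
  set D : Set (Fin m → EuclideanSpace ℂ (Fin d)) := {w | ¬ LinearIndependent ℂ w} with hD
  have hDmeas : MeasurableSet D := GramAux.measurableSet_dep
  have hDnull : volume D = 0 := GramAux.volume_dep_eq_zero hmd
  set π : (Fin Ω → EuclideanSpace ℂ (Fin d)) → (Fin m → EuclideanSpace ℂ (Fin d)) :=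
    fun v j => v (Fin.castLE hmΩ j) with hπ
  -- transfer nullity to the cylinder
  have hNnull : volume (π ⁻¹' D) = 0 := by
    have hsum : m + (Ω - m) = Ω := by omega
    set g : Fin m ⊕ Fin (Ω - m) ≃ Fin Ω := finSumFinEquiv.trans (finCongr hsum) with hg
    set Φ₁ := (MeasurableEquiv.piCongrLeft (fun _ : Fin Ω => EuclideanSpace ℂ (Fin d)) g).symm
    set Φ₂ := MeasurableEquiv.sumPiEquivProdPi
      (fun _ : Fin m ⊕ Fin (Ω - m) => EuclideanSpace ℂ (Fin d))
    have mp1 : MeasurePreserving Φ₁ volume volume :=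
      (volume_measurePreserving_piCongrLeft _ g).symm
    have mp2 : MeasurePreserving Φ₂ volume volume :=
      volume_measurePreserving_sumPiEquivProdPi _
    have mp : MeasurePreserving (Φ₂ ∘ Φ₁) volume volume := mp2.comp mp1
    have hset : π ⁻¹' D = (Φ₂ ∘ Φ₁) ⁻¹' (D ×ˢ Set.univ) := by
      ext v
      have h1 : ∀ j : Fin m, (Φ₂ (Φ₁ v)).1 j = v (Fin.castLE hmΩ j) := by
        intro j
        have hgj : g (Sum.inl j) = Fin.castLE hmΩ j := by
          apply Fin.ext
          simp [hg]
        show v (g (Sum.inl j)) = _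
        rw [hgj]
      have h2 : (Φ₂ (Φ₁ v)).1 = π v := funext h1
      simp only [Set.mem_preimage, Function.comp_apply, Set.mem_prod, Set.mem_univ, and_true, h2]
    rw [hset, mp.measure_preimage ((hDmeas.prod MeasurableSet.univ).nullMeasurableSet)]
    rw [Measure.volume_eq_prod, Measure.prod_prod, hDnull, zero_mul]
  have hμnull : μ (π ⁻¹' D) = 0 := hμ hNnull
  have hae : ∀ᵐ v ∂μ, LinearIndependent ℂ (π v) := by
    rw [ae_iff]
    simpa [π, hD] using hμnull
  filter_upwards [hae] with v hv
  -- rank computation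
  set A : Matrix (Fin d) (Fin Ω) ℂ := Matrix.of fun k j => v j k with hA
  have hgram : gramMatrix v = Aᴴ * A := by
    ext i j
    simp [gramMatrix, Matrix.mul_apply, Matrix.conjTranspose_apply, hA,
      PiLp.inner_apply, RCLike.inner_apply, mul_comm]
  have hrank : (gramMatrix v).rank = A.rank := by
    rw [hgram, Matrix.rank_conjTranspose_mul_self]
  rw [hrank]
  refine le_antisymm (le_min ?_ ?_) ?_
  · simpa using A.rank_le_card_width
  · simpa using A.rank_le_card_height
  · -- lower bound
    rw [Matrix.rank_eq_finrank_span_cols]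
    have hLI : LinearIndependent ℂ (fun j : Fin m => Aᵀ (Fin.castLE hmΩ j)) := by
      have := hv.map' (WithLp.linearEquiv 2 ℂ (Fin d → ℂ)).toLinearMap
        (WithLp.linearEquiv 2 ℂ (Fin d → ℂ)).ker
      exact this
    have h1 : Module.finrank ℂ
        (Submodule.span ℂ (Set.range fun j : Fin m => Aᵀ (Fin.castLE hmΩ j))) = m := by
      rw [finrank_span_eq_card hLI, Fintype.card_fin]
    have h2 : Submodule.span ℂ (Set.range fun j : Fin m => Aᵀ (Fin.castLE hmΩ j))
        ≤ Submodule.span ℂ (Set.range Aᵀ) := by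
      apply Submodule.span_mono
      rintro x ⟨j, rfl⟩
      exact ⟨Fin.castLE hmΩ j, rfl⟩
    calc m = Module.finrank ℂ
          (Submodule.span ℂ (Set.range fun j : Fin m => Aᵀ (Fin.castLE hmΩ j))) := h1.symm
      _ ≤ Module.finrank ℂ (Submodule.span ℂ (Set.range Aᵀ)) := Submodule.finrank_mono h2
end

section
/- Fix a natural number d ≥ 1 and let P be the complex matrix indexed by Fin d × Fin d with entries P (a,b) (c,e) = 1/d if a = b and c = e, and 0 otherwise (the orthogonal projection onto the maximally entangled vector). For every real number y and every natural number n ≥ 1, the matrix ρ = ((1 − y)/d²) • 1 + y • P satisfies Matrix.trace (ρ ^ n) = ((1 + y·(d² − 1))^n + (d² − 1)·(1 − y)^n) / d^{2n}. -/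
/-- The orthogonal projection onto the maximally entangled vector,
`P (a,b) (c,e) = 1/d` if `a = b` and `c = e`, and `0` otherwise. -/
noncomputable def maxEntProj (d : ℕ) : Matrix (Fin d × Fin d) (Fin d × Fin d) ℂ :=
  Matrix.of fun ab ce => if ab.1 = ab.2 ∧ ce.1 = ce.2 then (1 / d : ℂ) else 0

lemma sum_diag_ite (d : ℕ) (c : ℂ) :
    (∑ x : Fin d × Fin d, if x.1 = x.2 then c else 0) = (d : ℂ) * c := by
  rw [Fintype.sum_prod_type]
  simp [Finset.sum_ite_eq, mul_comm]

lemma maxEntProj_mul_self (d : ℕ) (hd : 1 ≤ d) :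
    maxEntProj d * maxEntProj d = maxEntProj d := by
  have hd0 : (d : ℂ) ≠ 0 := Nat.cast_ne_zero.mpr (by omega)
  ext ab ce
  simp only [Matrix.mul_apply, maxEntProj, Matrix.of_apply]
  by_cases h : ab.1 = ab.2 ∧ ce.1 = ce.2
  · simp only [h.1, h.2, and_true, true_and, if_true]
    have : ∀ x : Fin d × Fin d,
        ((if x.1 = x.2 then (1 / d : ℂ) else 0) * if x.1 = x.2 then (1 / d : ℂ) else 0)
          = if x.1 = x.2 then (1 / d : ℂ) * (1 / d) else 0 := by
      intro x; by_cases hx : x.1 = x.2 <;> simp [hx]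
    rw [Finset.sum_congr rfl fun x _ => this x, sum_diag_ite]
    field_simp
  · simp only [h, if_false]
    rw [eq_comm, Finset.sum_eq_zero]
    intro x _
    by_cases h1 : ab.1 = ab.2 ∧ x.1 = x.2
    · have : ¬ (x.1 = x.2 ∧ ce.1 = ce.2) := fun h2 => h ⟨h1.1, h2.2⟩
      simp [this]
    · simp [h1]

lemma maxEntProj_trace (d : ℕ) (hd : 1 ≤ d) :
    Matrix.trace (maxEntProj d) = 1 := by
  have hd0 : (d : ℂ) ≠ 0 := Nat.cast_ne_zero.mpr (by omega)
  simp only [Matrix.trace, Matrix.diag, maxEntProj, Matrix.of_apply, and_self]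
  rw [sum_diag_ite]
  field_simp

lemma pow_aff (d : ℕ) (hd : 1 ≤ d) (a c : ℂ) (n : ℕ) :
    (a • (1 : Matrix (Fin d × Fin d) (Fin d × Fin d) ℂ) + c • maxEntProj d) ^ n
      = a ^ n • (1 : Matrix (Fin d × Fin d) (Fin d × Fin d) ℂ)
        + ((a + c) ^ n - a ^ n) • maxEntProj d := by
  induction n with
  | zero => simp
  | succ n ih =>
    rw [pow_succ, ih]
    simp only [add_mul, Matrix.mul_add, Matrix.smul_mul, Matrix.mul_smul, Matrix.one_mul, Matrix.mul_one,
      maxEntProj_mul_self d hd, smul_smul, smul_add]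
    module

theorem trace_pow_brownian_GUE_state (d : ℕ) (hd : 1 ≤ d) (y : ℝ) (n : ℕ) (hn : 1 ≤ n) :
    Matrix.trace
        (((((1 : ℂ) - (y : ℂ)) / (d : ℂ) ^ 2) • (1 : Matrix (Fin d × Fin d) (Fin d × Fin d) ℂ)
            + (y : ℂ) • maxEntProj d) ^ n)
      = ((1 + (y : ℂ) * ((d : ℂ) ^ 2 - 1)) ^ n
          + ((d : ℂ) ^ 2 - 1) * (1 - (y : ℂ)) ^ n) / (d : ℂ) ^ (2 * n) := by
  have hd0 : (d : ℂ) ≠ 0 := Nat.cast_ne_zero.mpr (by omega)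
  rw [pow_aff d hd, Matrix.trace_add, Matrix.trace_smul, Matrix.trace_smul,
    Matrix.trace_one, maxEntProj_trace d hd]
  have hcard : (Fintype.card (Fin d × Fin d) : ℂ) = (d : ℂ) ^ 2 := by
    simp [Fintype.card_prod]; ring
  rw [hcard]
  have key : ((1 : ℂ) - y) / (d : ℂ) ^ 2 + y = (1 + (y : ℂ) * ((d : ℂ) ^ 2 - 1)) / (d : ℂ) ^ 2 := by
    field_simp; ring
  rw [key, div_pow, div_pow, ← pow_mul]
  simp only [smul_eq_mul]
  have hdn : ((d : ℂ) ^ 2) ^ n ≠ 0 := pow_ne_zero _ (pow_ne_zero _ hd0)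
  field_simp
  ring
end

section
/- Fix d ≥ 1. For i : Fin d let D i = stdBasisMatrix i i 1 ∈ Matrix (Fin d) (Fin d) ℂ; for i < j let S i j = (1/√2) • (stdBasisMatrix i j 1 + stdBasisMatrix j i 1) and A i j = (Complex.I/√2) • (stdBasisMatrix i j 1 − stdBasisMatrix j i 1). Let conj(X) denote entrywise complex conjugation of X, ⊗ the Kronecker product, and let P be the matrix indexed by Fin d × Fin d with P (a,b) (c,e) = 1/d if a = b and c = e, and 0 otherwise. Then Σ_{i} (D i ⊗ 1 − 1 ⊗ conj (D i))² + Σ_{i < j} ((S i j ⊗ 1 − 1 ⊗ conj (S i j))² + (A i j ⊗ 1 − 1 ⊗ conj (A i j))²) = (2d) • (1 − P). -/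
open Matrix

/-- Diagonal element of the Hermitian basis of `d × d` matrices. -/
noncomputable def Dmat (d : ℕ) (i : Fin d) : Matrix (Fin d) (Fin d) ℂ :=
  Matrix.single i i 1

/-- Symmetric off-diagonal element of the Hermitian basis. -/
noncomputable def Smat (d : ℕ) (i j : Fin d) : Matrix (Fin d) (Fin d) ℂ :=
  ((1 : ℂ) / (Real.sqrt 2 : ℂ)) •
    (Matrix.single i j 1 + Matrix.single j i 1)

/-- Antisymmetric off-diagonal element of the Hermitian basis. -/
noncomputable def Amat (d : ℕ) (i j : Fin d) : Matrix (Fin d) (Fin d) ℂ :=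
  (Complex.I / (Real.sqrt 2 : ℂ)) •
    (Matrix.single i j 1 - Matrix.single j i 1)

/-- Entrywise complex conjugation of a matrix. -/
def conjMat {d : ℕ} (X : Matrix (Fin d) (Fin d) ℂ) : Matrix (Fin d) (Fin d) ℂ :=
  X.map (starRingEnd ℂ)

/-- The two-replica lift `X ⊗ 1 − 1 ⊗ conj X`. -/
noncomputable def replicaLift {d : ℕ} (X : Matrix (Fin d) (Fin d) ℂ) :
    Matrix (Fin d × Fin d) (Fin d × Fin d) ℂ :=
  Matrix.kroneckerMap (· * ·) X (1 : Matrix (Fin d) (Fin d) ℂ)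
    - Matrix.kroneckerMap (· * ·) (1 : Matrix (Fin d) (Fin d) ℂ) (conjMat X)

namespace BGUEaux

open Finset Kronecker

variable {d : ℕ}

lemma sqrt2_sq : ((Real.sqrt 2 : ℝ) : ℂ) * ((Real.sqrt 2 : ℝ) : ℂ) = 2 := by
  rw [← Complex.ofReal_mul, Real.mul_self_sqrt (by norm_num : (0:ℝ) ≤ 2)]
  norm_num

lemma sqrt2_ne : ((Real.sqrt 2 : ℝ) : ℂ) ≠ 0 := by
  intro h0
  have := sqrt2_sq
  rw [h0, mul_zero] at this
  norm_num at this

lemma c1_sq : ((1 : ℂ) / (Real.sqrt 2 : ℂ)) * ((1 : ℂ) / (Real.sqrt 2 : ℂ)) = (1/2 : ℂ) := by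
  rw [div_mul_div_comm, one_mul, sqrt2_sq]

lemma c2_sq : (Complex.I / (Real.sqrt 2 : ℂ)) * (Complex.I / (Real.sqrt 2 : ℂ)) = -(1/2 : ℂ) := by
  rw [div_mul_div_comm, Complex.I_mul_I, sqrt2_sq]
  norm_num

lemma conj_D (i : Fin d) : conjMat (Dmat d i) = Dmat d i := by
  ext a b
  simp [conjMat, Dmat, Matrix.single, apply_ite (starRingEnd ℂ)]

lemma conj_S (i j : Fin d) : conjMat (Smat d i j) = Smat d i j := by
  ext a b
  simp [conjMat, Smat, Matrix.single, apply_ite (starRingEnd ℂ), smul_eq_mul,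
    _root_.map_mul, _root_.map_add, map_div₀, mul_add, mul_ite, mul_one, mul_zero, Complex.conj_ofReal]

lemma conj_A (i j : Fin d) : conjMat (Amat d i j) = -(Amat d i j) := by
  ext a b
  simp [conjMat, Amat, Matrix.single, apply_ite (starRingEnd ℂ), smul_eq_mul,
    _root_.map_mul, _root_.map_sub, map_div₀, mul_sub, mul_ite, mul_one, mul_zero, Complex.conj_ofReal, Complex.conj_I]
  split_ifs <;> ring

lemma kron_sub_left (A B C : Matrix (Fin d) (Fin d) ℂ) :
    Matrix.kroneckerMap (· * ·) (A - B) C =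
      Matrix.kroneckerMap (· * ·) A C - Matrix.kroneckerMap (· * ·) B C := by
  ext ⟨a, b⟩ ⟨c, e⟩
  simp [Matrix.kroneckerMap_apply, sub_mul]

lemma kron_sub_right (A B C : Matrix (Fin d) (Fin d) ℂ) :
    Matrix.kroneckerMap (· * ·) A (B - C) =
      Matrix.kroneckerMap (· * ·) A B - Matrix.kroneckerMap (· * ·) A C := by
  ext ⟨a, b⟩ ⟨c, e⟩
  simp [Matrix.kroneckerMap_apply, mul_sub]

lemma sum_kron_left {ι : Type*} (s : Finset ι) (f : ι → Matrix (Fin d) (Fin d) ℂ)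
    (B : Matrix (Fin d) (Fin d) ℂ) :
    Matrix.kroneckerMap (· * ·) (∑ i ∈ s, f i) B =
      ∑ i ∈ s, Matrix.kroneckerMap (· * ·) (f i) B := by
  ext ⟨a, b⟩ ⟨c, e⟩
  simp [Matrix.kroneckerMap_apply, Matrix.sum_apply, Finset.sum_mul]

lemma sum_kron_right {ι : Type*} (s : Finset ι) (f : ι → Matrix (Fin d) (Fin d) ℂ)
    (B : Matrix (Fin d) (Fin d) ℂ) :
    Matrix.kroneckerMap (· * ·) B (∑ i ∈ s, f i) =
      ∑ i ∈ s, Matrix.kroneckerMap (· * ·) B (f i) := by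
  ext ⟨a, b⟩ ⟨c, e⟩
  simp [Matrix.kroneckerMap_apply, Matrix.sum_apply, Finset.mul_sum]

lemma lift_sq (X : Matrix (Fin d) (Fin d) ℂ) :
    replicaLift X ^ 2 =
      Matrix.kroneckerMap (· * ·) (X * X) (1 : Matrix (Fin d) (Fin d) ℂ)
        + Matrix.kroneckerMap (· * ·) (1 : Matrix (Fin d) (Fin d) ℂ) (conjMat X * conjMat X)
        - (2 : ℂ) • Matrix.kroneckerMap (· * ·) X (conjMat X) := by
  unfold replicaLift
  rw [sq, sub_mul, mul_sub, mul_sub, ← Matrix.mul_kronecker_mul, ← Matrix.mul_kronecker_mul,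
    ← Matrix.mul_kronecker_mul, ← Matrix.mul_kronecker_mul]
  simp only [Matrix.one_mul, Matrix.mul_one]
  module

lemma D_sq (i : Fin d) : Dmat d i * Dmat d i = Dmat d i := by
  unfold Dmat
  rw [Matrix.single_mul_single_same, one_mul]

lemma SA_sq {i j : Fin d} (h : i ≠ j) :
    Smat d i j * Smat d i j + Amat d i j * Amat d i j
      = Matrix.single i i (1:ℂ) + Matrix.single j j (1:ℂ) := by
  unfold Smat Amat
  rw [smul_mul_assoc, mul_smul_comm, smul_smul, smul_mul_assoc, mul_smul_comm, smul_smul,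
    c1_sq, c2_sq]
  simp only [add_mul, mul_add, sub_mul, mul_sub, Matrix.single_mul_single_same,
    Matrix.single_mul_single_of_ne (h := h.symm), Matrix.single_mul_single_of_ne (h := h),
    one_mul]
  module

end BGUEaux

namespace BGUEaux

lemma sum_diag_eq_one (d : ℕ) : ∑ i : Fin d, Matrix.single i i (1:ℂ) = 1 := by
  ext a b
  simp [Matrix.single, Matrix.sum_apply, Matrix.one_apply, ite_and]

lemma sum_sq {d : ℕ} (hd : 1 ≤ d) :
    (∑ i : Fin d, Dmat d i * Dmat d i)
      + ∑ i : Fin d, ∑ j ∈ Finset.Ioi i, (Smat d i j * Smat d i j + Amat d i j * Amat d i j)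
    = (d : ℂ) • (1 : Matrix (Fin d) (Fin d) ℂ) := by
  have h1 : ∑ i : Fin d, ∑ j ∈ Finset.Ioi i, (Smat d i j * Smat d i j + Amat d i j * Amat d i j)
      = ∑ i : Fin d, ∑ j ∈ Finset.Ioi i,
          ((fun _ y : Fin d => Matrix.single y y (1:ℂ)) j i
            + (fun _ y : Fin d => Matrix.single y y (1:ℂ)) i j) := by
    refine Finset.sum_congr rfl fun i _ => Finset.sum_congr rfl fun j hj => ?_
    exact SA_sq (Finset.mem_Ioi.mp hj).ne
  rw [h1, Finset.sum_sum_Ioi_add_eq_sum_sum_off_diag]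
  simp only [D_sq, Finset.sum_const, Finset.card_compl, Finset.card_singleton,
    Fintype.card_fin]
  rw [← Finset.sum_add_distrib]
  have key : ∀ i : Fin d,
      Dmat d i + (d - 1) • Matrix.single i i (1:ℂ)
        = (d : ℂ) • Matrix.single i i (1:ℂ) := by
    intro i
    rw [← Nat.cast_smul_eq_nsmul ℂ, Nat.cast_sub hd, Dmat]
    push_cast
    module
  trans (∑ i : Fin d, (d : ℂ) • Matrix.single i i (1:ℂ))
  · exact Finset.sum_congr rfl fun i _ => key i
  · rw [← Finset.smul_sum, sum_diag_eq_one]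

lemma SA_kron {d : ℕ} (i j : Fin d) :
    Matrix.kroneckerMap (· * ·) (Smat d i j) (conjMat (Smat d i j))
      + Matrix.kroneckerMap (· * ·) (Amat d i j) (conjMat (Amat d i j))
    = Matrix.kroneckerMap (· * ·) (Matrix.single i j (1:ℂ))
        (Matrix.single i j (1:ℂ))
      + Matrix.kroneckerMap (· * ·) (Matrix.single j i (1:ℂ))
        (Matrix.single j i (1:ℂ)) := by
  rw [conj_S, conj_A]
  unfold Smat Amat
  rw [show -((Complex.I / (Real.sqrt 2 : ℂ)) •
        (Matrix.single i j (1:ℂ) - Matrix.single j i 1))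
      = (-(Complex.I / (Real.sqrt 2 : ℂ))) •
        (Matrix.single i j (1:ℂ) - Matrix.single j i 1) from (neg_smul _ _).symm]
  rw [Matrix.smul_kronecker, Matrix.kronecker_smul, smul_smul,
      Matrix.smul_kronecker, Matrix.kronecker_smul, smul_smul, c1_sq,
      show (Complex.I / (Real.sqrt 2 : ℂ)) * -(Complex.I / (Real.sqrt 2 : ℂ)) = (1/2 : ℂ) by
        rw [mul_neg, c2_sq]; ring]
  rw [Matrix.kronecker_add, Matrix.add_kronecker, Matrix.add_kronecker,
      kron_sub_right, kron_sub_left, kron_sub_left]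
  module

lemma sum_all_kron {d : ℕ} (hd : 1 ≤ d) :
    ∑ i : Fin d, ∑ j : Fin d,
        Matrix.kroneckerMap (· * ·) (Matrix.single i j (1:ℂ))
          (Matrix.single i j (1:ℂ))
      = (d : ℂ) • maxEntProj d := by
  have hd0 : (d : ℂ) ≠ 0 := Nat.cast_ne_zero.mpr (by omega)
  ext ⟨a, b⟩ ⟨c, e⟩
  have step : ∀ x y : Fin d,
      (Matrix.kroneckerMap (· * ·) (Matrix.single x y (1:ℂ))
        (Matrix.single x y (1:ℂ))) (a, b) (c, e)
      = ((if x = a then (1:ℂ) else 0) * (if x = b then (1:ℂ) else 0))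
        * ((if y = c then (1:ℂ) else 0) * (if y = e then (1:ℂ) else 0)) := by
    intro x y
    simp only [Matrix.kroneckerMap_apply, Matrix.single, Matrix.of_apply, ite_and,
      ite_mul, mul_ite, one_mul, mul_one, zero_mul, mul_zero]
    split_ifs <;> ring
  have key : ∀ u v : Fin d,
      (∑ x : Fin d, (if x = u then (1:ℂ) else 0) * (if x = v then (1:ℂ) else 0))
        = if u = v then 1 else 0 := by
    intro u v
    simp only [ite_mul, one_mul, zero_mul, Finset.sum_ite_eq', Finset.mem_univ, if_true]
  simp only [Matrix.sum_apply, step]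
  rw [← Finset.sum_mul_sum, key, key]
  simp only [maxEntProj, Matrix.smul_apply, Matrix.of_apply, smul_eq_mul, ite_and]
  split_ifs <;> field_simp <;> ring

lemma sum_kron {d : ℕ} (hd : 1 ≤ d) :
    (∑ i : Fin d, Matrix.kroneckerMap (· * ·) (Dmat d i) (conjMat (Dmat d i)))
      + ∑ i : Fin d, ∑ j ∈ Finset.Ioi i,
          (Matrix.kroneckerMap (· * ·) (Smat d i j) (conjMat (Smat d i j))
            + Matrix.kroneckerMap (· * ·) (Amat d i j) (conjMat (Amat d i j)))
    = (d : ℂ) • maxEntProj d := by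
  have h1 : ∑ i : Fin d, ∑ j ∈ Finset.Ioi i,
        (Matrix.kroneckerMap (· * ·) (Smat d i j) (conjMat (Smat d i j))
          + Matrix.kroneckerMap (· * ·) (Amat d i j) (conjMat (Amat d i j)))
      = ∑ i : Fin d, ∑ j ∈ Finset.Ioi i,
          ((fun x y : Fin d => Matrix.kroneckerMap (· * ·)
              (Matrix.single y x (1:ℂ)) (Matrix.single y x (1:ℂ))) j i
            + (fun x y : Fin d => Matrix.kroneckerMap (· * ·)
              (Matrix.single y x (1:ℂ)) (Matrix.single y x (1:ℂ))) i j) := by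
    refine Finset.sum_congr rfl fun i _ => Finset.sum_congr rfl fun j hj => SA_kron i j
  rw [h1, Finset.sum_sum_Ioi_add_eq_sum_sum_off_diag]
  simp only [conj_D]
  rw [← Finset.sum_add_distrib, ← sum_all_kron hd]
  refine Finset.sum_congr rfl fun i _ => ?_
  have := Finset.sum_compl_add_sum ({i} : Finset (Fin d))
    (fun j => Matrix.kroneckerMap (· * ·) (Matrix.single i j (1:ℂ))
      (Matrix.single i j (1:ℂ)))
  rw [← this, Finset.sum_singleton]
  unfold Dmat
  rw [add_comm]

end BGUEaux

theorem brownian_GUE_effective_hamiltonian (d : ℕ) (hd : 1 ≤ d) :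
    (∑ i : Fin d, replicaLift (Dmat d i) ^ 2)
      + ∑ i : Fin d, ∑ j ∈ Finset.Ioi i,
          (replicaLift (Smat d i j) ^ 2 + replicaLift (Amat d i j) ^ 2)
    = (2 * (d : ℂ)) •
        ((1 : Matrix (Fin d × Fin d) (Fin d × Fin d) ℂ) - maxEntProj d) := by
  have h1 := BGUEaux.sum_sq (d := d) hd
  have h2 : (∑ i : Fin d, conjMat (Dmat d i) * conjMat (Dmat d i))
      + ∑ i : Fin d, ∑ j ∈ Finset.Ioi i,
          (conjMat (Smat d i j) * conjMat (Smat d i j)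
            + conjMat (Amat d i j) * conjMat (Amat d i j))
      = (d : ℂ) • (1 : Matrix (Fin d) (Fin d) ℂ) := by
    simp only [BGUEaux.conj_D, BGUEaux.conj_S, BGUEaux.conj_A, neg_mul_neg]
    exact h1
  have h3 := BGUEaux.sum_kron (d := d) hd
  calc (∑ i : Fin d, replicaLift (Dmat d i) ^ 2)
      + ∑ i : Fin d, ∑ j ∈ Finset.Ioi i,
          (replicaLift (Smat d i j) ^ 2 + replicaLift (Amat d i j) ^ 2)
      = Matrix.kroneckerMap (· * ·)
          ((∑ i : Fin d, Dmat d i * Dmat d i)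
            + ∑ i : Fin d, ∑ j ∈ Finset.Ioi i,
                (Smat d i j * Smat d i j + Amat d i j * Amat d i j))
          (1 : Matrix (Fin d) (Fin d) ℂ)
        + Matrix.kroneckerMap (· * ·) (1 : Matrix (Fin d) (Fin d) ℂ)
          ((∑ i : Fin d, conjMat (Dmat d i) * conjMat (Dmat d i))
            + ∑ i : Fin d, ∑ j ∈ Finset.Ioi i,
                (conjMat (Smat d i j) * conjMat (Smat d i j)
                  + conjMat (Amat d i j) * conjMat (Amat d i j)))
        - (2 : ℂ) •
          ((∑ i : Fin d, Matrix.kroneckerMap (· * ·) (Dmat d i) (conjMat (Dmat d i)))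
            + ∑ i : Fin d, ∑ j ∈ Finset.Ioi i,
                (Matrix.kroneckerMap (· * ·) (Smat d i j) (conjMat (Smat d i j))
                  + Matrix.kroneckerMap (· * ·) (Amat d i j) (conjMat (Amat d i j)))) := by
        simp only [BGUEaux.lift_sq, Matrix.add_kronecker, Matrix.kronecker_add,
          BGUEaux.sum_kron_left, BGUEaux.sum_kron_right, Finset.smul_sum,
          Finset.sum_add_distrib, Finset.sum_sub_distrib, smul_add]
        abel
    _ = Matrix.kroneckerMap (· * ·) ((d : ℂ) • (1 : Matrix (Fin d) (Fin d) ℂ))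
          (1 : Matrix (Fin d) (Fin d) ℂ)
        + Matrix.kroneckerMap (· * ·) (1 : Matrix (Fin d) (Fin d) ℂ)
          ((d : ℂ) • (1 : Matrix (Fin d) (Fin d) ℂ))
        - (2 : ℂ) • ((d : ℂ) • maxEntProj d) := by
        rw [h1, h2, h3]
    _ = (2 * (d : ℂ)) •
        ((1 : Matrix (Fin d × Fin d) (Fin d × Fin d) ℂ) - maxEntProj d) := by
        rw [Matrix.smul_kronecker, Matrix.kronecker_smul, Matrix.one_kronecker_one]
        module
end

section
/- Let N be a natural number and let α, γ : Fin N → Fin 4 be Pauli words. Then the Pauli strings satisfy P α * P γ = (−1)^k • (P γ * P α), where k is the cardinality of the set {i : Fin N | α i ≠ 0 ∧ γ i ≠ 0 ∧ α i ≠ γ i} of sites where α and γ carry different non-identity Pauli matrices. -/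
/-- The identity and the three Pauli matrices. -/
noncomputable def pauli : Fin 4 → Matrix (Fin 2) (Fin 2) ℂ :=
  ![1, !![0, 1; 1, 0], !![0, -Complex.I; Complex.I, 0], !![1, 0; 0, -1]]

/-- The Pauli string associated to a word `α : Fin N → Fin 4`:
the `N`-fold Kronecker (tensor) product of the matrices `pauli (α i)`. -/
noncomputable def pauliString (N : ℕ) (α : Fin N → Fin 4) :
    Matrix (Fin N → Fin 2) (Fin N → Fin 2) ℂ :=
  Matrix.of fun r c => ∏ i, pauli (α i) (r i) (c i)

lemma pauli_comm (a b : Fin 4) :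
    pauli a * pauli b =
      (if a ≠ 0 ∧ b ≠ 0 ∧ a ≠ b then (-1 : ℂ) else 1) • (pauli b * pauli a) := by
  fin_cases a <;> fin_cases b <;>
    simp [pauli, Matrix.one_fin_two, Matrix.mul_fin_two]

lemma entry (N : ℕ) (α γ : Fin N → Fin 4) (r c : Fin N → Fin 2) :
    (pauliString N α * pauliString N γ) r c
      = ∏ i, (pauli (α i) * pauli (γ i)) (r i) (c i) := by
  simp only [pauliString, Matrix.mul_apply, Matrix.of_apply, ← Finset.prod_mul_distrib]
  rw [← Fintype.piFinset_univ]
  exact (Finset.prod_univ_sum (fun _ : Fin N => (Finset.univ : Finset (Fin 2))) (fun i x => pauli (α i) (r i) x * pauli (γ i) x (c i))).symm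

theorem pauliString_comm (N : ℕ) (α γ : Fin N → Fin 4) :
    pauliString N α * pauliString N γ =
      ((-1 : ℂ) ^
          (Finset.univ.filter fun i : Fin N =>
            α i ≠ 0 ∧ γ i ≠ 0 ∧ α i ≠ γ i).card) •
        (pauliString N γ * pauliString N α) := by
  ext r c
  rw [Matrix.smul_apply, entry, entry]
  have h : ∀ i : Fin N, (pauli (α i) * pauli (γ i)) (r i) (c i)
      = (if α i ≠ 0 ∧ γ i ≠ 0 ∧ α i ≠ γ i then (-1 : ℂ) else 1)
        * (pauli (γ i) * pauli (α i)) (r i) (c i) := by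
    intro i
    rw [pauli_comm (α i) (γ i)]
    simp [Matrix.smul_apply]
  rw [Finset.prod_congr rfl (fun i _ => h i), Finset.prod_mul_distrib]
  congr 1
  rw [Finset.prod_ite, Finset.prod_const, Finset.prod_const, one_pow, mul_one]
end

section
/- Let N, q : ℕ and let α : Fin N → Fin 4 be a Pauli word of weight s = |α|. Then Σ over all Pauli words γ : Fin N → Fin 4 of weight |γ| = q of the matrix (P α − P γ * P α * P γ) equals (Σ_{m = 0}^{q} (s.choose m) · ((N − s).choose (q − m)) · 3^{q − m} · (3^m − (−1)^m)) • P α. In particular every Pauli string P α is an eigenvector of the two-replica effective Hamiltonian superoperator A ↦ J Σ_{|γ| = q} (A − P γ * A * P γ) of the Brownian spin cluster, with eigenvalue E(s) = J Σ_{m=0}^{q} C(s,m) C(N−s, q−m) 3^{q−m} (3^m − (−1)^m) depending only on the weight s. -/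
/-- The weight (length) of a Pauli word: the number of non-identity sites. -/
def pauliWeight (N : ℕ) (α : Fin N → Fin 4) : ℕ :=
  (Finset.univ.filter fun i : Fin N => α i ≠ 0).card

open Polynomial Finset

/-- The commutation sign of two Pauli matrices: `pauli b * pauli a * pauli b = psign a b • pauli a`. -/
def psign (a b : Fin 4) : ℤ := if a ≠ 0 ∧ b ≠ 0 ∧ a ≠ b then -1 else 1

lemma pauli_conj (a b : Fin 4) :
    pauli b * pauli a * pauli b = ((psign a b : ℤ) : ℂ) • pauli a := by
  fin_cases a <;> fin_cases b <;>
    · ext i j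
      fin_cases i <;> fin_cases j <;>
        simp [pauli, psign, Matrix.mul_apply, Fin.sum_univ_two, Complex.I_mul_I]

lemma kron_mul {N : ℕ} (A B : Fin N → Matrix (Fin 2) (Fin 2) ℂ) :
    (Matrix.of fun r c : Fin N → Fin 2 => ∏ i, A i (r i) (c i)) *
      (Matrix.of fun r c : Fin N → Fin 2 => ∏ i, B i (r i) (c i))
    = Matrix.of fun r c => ∏ i, (A i * B i) (r i) (c i) := by
  ext r c
  simp only [Matrix.mul_apply, Matrix.of_apply, ← Finset.prod_mul_distrib]
  rw [Fintype.prod_sum (f := fun i x => A i (r i) x * B i x (c i))]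

lemma pauliString_conj (N : ℕ) (α γ : Fin N → Fin 4) :
    pauliString N γ * pauliString N α * pauliString N γ
      = (((∏ i, psign (α i) (γ i) : ℤ) : ℤ) : ℂ) • pauliString N α := by
  unfold pauliString
  rw [kron_mul, kron_mul]
  ext r c
  simp only [Matrix.of_apply, Matrix.smul_apply]
  calc ∏ i, (pauli (γ i) * pauli (α i) * pauli (γ i)) (r i) (c i)
      = ∏ i, (((psign (α i) (γ i) : ℤ) : ℂ) • pauli (α i)) (r i) (c i) := by
        refine Finset.prod_congr rfl fun i _ => ?_
        rw [pauli_conj]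
    _ = (((∏ i, psign (α i) (γ i) : ℤ) : ℂ)) * ∏ i, pauli (α i) (r i) (c i) := by
        simp only [Matrix.smul_apply, smul_eq_mul, Finset.prod_mul_distrib]
        push_cast
        ring
    _ = _ := rfl

lemma coeff_one_add_CX_pow (c : ℤ) (n k : ℕ) :
    ((1 + C c * X) ^ n).coeff k = (n.choose k : ℤ) * c ^ k := by
  rw [add_comm, add_pow, finset_sum_coeff]
  simp only [mul_pow, ← C_pow, one_pow, mul_one, ← C_eq_natCast, coeff_mul_C, coeff_C_mul,
    coeff_X_pow]
  rw [Finset.sum_eq_single k]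
  · rcases le_or_gt k n with h | h
    · simp [mul_comm]
    · rw [Nat.choose_eq_zero_of_lt h]; simp
  · intro j _ hj; simp [Ne.symm hj]
  · intro h
    rw [mem_range, not_lt] at h
    rw [Nat.choose_eq_zero_of_lt h]; simp

lemma site_sum_one : (∑ b : Fin 4, (if b = 0 then 1 else X : ℤ[X])) = 1 + C 3 * X := by
  rw [Fin.sum_univ_four]
  norm_num
  ring_nf
  simp [Polynomial.C_eq_natCast]
  ring

lemma site_sum_psign (a : Fin 4) :
    (∑ b : Fin 4, C (psign a b) * (if b = 0 then 1 else X))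
      = if a = 0 then 1 + C 3 * X else 1 - X := by
  fin_cases a <;>
    · simp only [psign, Fin.sum_univ_four]
      norm_num
      try ring_nf
      try simp [Polynomial.C_eq_natCast]
      try ring

lemma count_identity (N q : ℕ) (α : Fin N → Fin 4) :
    ∑ γ ∈ Finset.univ.filter (fun γ : Fin N → Fin 4 => pauliWeight N γ = q),
        (1 - ∏ i, psign (α i) (γ i))
      = ∑ m ∈ Finset.range (q + 1),
          ((pauliWeight N α).choose m : ℤ) * ((N - pauliWeight N α).choose (q - m))
            * 3 ^ (q - m) * (3 ^ m - (-1) ^ m) := by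
  set s := pauliWeight N α with hs
  have hsN : s ≤ N := by
    simpa [hs, pauliWeight] using
      (Finset.card_filter_le Finset.univ fun i : Fin N => α i ≠ 0)
  have key : ∀ f : (Fin N → Fin 4) → ℤ,
      ∑ γ ∈ filter (fun γ => pauliWeight N γ = q) univ, f γ
        = (∑ γ : Fin N → Fin 4, C (f γ) * X ^ pauliWeight N γ).coeff q := by
    intro f
    rw [finset_sum_coeff]
    simp only [coeff_C_mul, coeff_X_pow]
    rw [Finset.sum_filter]
    refine Finset.sum_congr rfl fun γ _ => ?_
    by_cases h : pauliWeight N γ = q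
    · simp [h]
    · simp [h, Ne.symm h]
  have hXw : ∀ γ : Fin N → Fin 4,
      (∏ i, (if γ i = 0 then 1 else X : ℤ[X])) = X ^ pauliWeight N γ := by
    intro γ
    rw [Finset.prod_ite, Finset.prod_const_one, Finset.prod_const, one_mul]
    rfl
  have hS1 : (∑ γ : Fin N → Fin 4, (C (1:ℤ)) * X ^ pauliWeight N γ)
      = (1 + C 3 * X) ^ N := by
    simp only [map_one, one_mul, ← hXw]
    rw [← Fintype.prod_sum (f := fun (_ : Fin N) (b : Fin 4) => (if b = 0 then 1 else X : ℤ[X]))]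
    simp [site_sum_one]
  have hS2 : (∑ γ : Fin N → Fin 4, C (∏ i, psign (α i) (γ i)) * X ^ pauliWeight N γ)
      = (1 - X) ^ s * (1 + C 3 * X) ^ (N - s) := by
    have hterm : ∀ γ : Fin N → Fin 4,
        C (∏ i, psign (α i) (γ i)) * X ^ pauliWeight N γ
          = ∏ i, (C (psign (α i) (γ i)) * (if γ i = 0 then 1 else X)) := by
      intro γ
      rw [Finset.prod_mul_distrib, map_prod, hXw]
    simp only [hterm]
    rw [← Fintype.prod_sum (f := fun (i : Fin N) (b : Fin 4) =>
      C (psign (α i) b) * (if b = 0 then 1 else X))]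
    simp only [site_sum_psign]
    rw [Finset.prod_ite, Finset.prod_const, Finset.prod_const]
    have h1 : (filter (fun i : Fin N => ¬ α i = 0) univ).card = s := rfl
    have h2 : (filter (fun i : Fin N => α i = 0) univ).card = N - s := by
      have := Finset.card_filter_add_card_filter_not
        (s := (univ : Finset (Fin N))) (p := fun i => α i = 0)
      simp only [Finset.card_univ, Fintype.card_fin] at this
      omega
    rw [h1, h2, mul_comm]
  rw [key]
  have hpoly : (∑ γ : Fin N → Fin 4, C (1 - ∏ i, psign (α i) (γ i)) * X ^ pauliWeight N γ)
      = ((1 + C 3 * X) ^ s - (1 - X) ^ s) * (1 + C 3 * X) ^ (N - s) := by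
    simp only [map_sub, sub_mul]
    rw [Finset.sum_sub_distrib, hS1, hS2, ← pow_add, Nat.add_sub_cancel' hsN]
  rw [hpoly, coeff_mul, Finset.Nat.sum_antidiagonal_eq_sum_range_succ_mk]
  refine Finset.sum_congr rfl fun m _ => ?_
  have hM : (1 - X : ℤ[X]) = 1 + C (-1) * X := by
    simp; ring
  rw [coeff_sub, hM, coeff_one_add_CX_pow, coeff_one_add_CX_pow, coeff_one_add_CX_pow]
  ring

theorem pauliString_eigenvector_of_effective_hamiltonian (N q : ℕ) (α : Fin N → Fin 4) :
    ∑ γ ∈ Finset.univ.filter (fun γ : Fin N → Fin 4 => pauliWeight N γ = q),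
        (pauliString N α - pauliString N γ * pauliString N α * pauliString N γ)
      = (∑ m ∈ Finset.range (q + 1),
            ((pauliWeight N α).choose m : ℤ) * ((N - pauliWeight N α).choose (q - m))
              * 3 ^ (q - m) * (3 ^ m - (-1) ^ m)) •
          pauliString N α := by
  calc ∑ γ ∈ Finset.univ.filter (fun γ : Fin N → Fin 4 => pauliWeight N γ = q),
        (pauliString N α - pauliString N γ * pauliString N α * pauliString N γ)
      = ∑ γ ∈ Finset.univ.filter (fun γ : Fin N → Fin 4 => pauliWeight N γ = q),
          (((1 - ∏ i, psign (α i) (γ i) : ℤ) : ℂ) • pauliString N α) := by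
        refine Finset.sum_congr rfl fun γ _ => ?_
        rw [pauliString_conj]
        push_cast
        rw [sub_smul, one_smul]
    _ = (((∑ γ ∈ Finset.univ.filter (fun γ : Fin N → Fin 4 => pauliWeight N γ = q),
            (1 - ∏ i, psign (α i) (γ i)) : ℤ) : ℂ)) • pauliString N α := by
        rw [← Finset.sum_smul, Int.cast_sum]
    _ = _ := by
        rw [count_identity, Int.cast_smul_eq_zsmul]
end

section
/- Let N, n : ℕ with n ≥ 1 and let w : ℕ → ℝ be any weight function. Then Σ over all n-tuples of Pauli words (α : Fin n → (Fin N → Fin 4)) of (∏_{k} w (|α k|)) · Complex.normSq (Matrix.trace (∏_{k} P (α k))) (the product of matrices taken in the order k = 0, 1, …, n−1) equals Σ_{s = 0}^{N} (N.choose s) · 3^s · (Σ_{l = 0}^{N} w l · Σ_{j = 0}^{min s l} (−1)^j · 3^{l − j} · (s.choose j) · ((N − s).choose (l − j)))^n. -/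
open Matrix Polynomial
open scoped Kronecker

/-- Commutation sign of two single-site Paulis. -/
def eps : Fin 4 → Fin 4 → ℝ := fun g x => if g = 0 ∨ x = 0 ∨ g = x then 1 else -1

lemma site_C3 (x y : Fin 4) :
    ∑ a : Fin 2, ∑ b : Fin 2, (starRingEnd ℂ) (pauli x a b) * pauli y a b
      = if x = y then 2 else 0 := by
  fin_cases x <;> fin_cases y <;>
    simp [pauli, Fin.sum_univ_succ, Matrix.one_apply] <;> ring_nf <;>
    simp [Complex.ext_iff]

set_option maxHeartbeats 2000000 in
lemma site_C2 (g : Fin 4) (a b c d : Fin 2) :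
    ∑ x : Fin 4, (eps g x : ℂ) * (pauli x a b * (starRingEnd ℂ) (pauli x c d))
      = 2 * (pauli g a c * (starRingEnd ℂ) (pauli g b d)) := by
  fin_cases g <;> fin_cases a <;> fin_cases b <;> fin_cases c <;> fin_cases d <;>
    · rw [Fin.sum_univ_four]
      norm_num [pauli, eps, Matrix.one_apply, Complex.ext_iff, Fin.ext_iff]
      try simp (config := { decide := true })
      try norm_num

/-- The inner combinatorial coefficient. -/
noncomputable def cval (N s l : ℕ) : ℝ :=
  ∑ j ∈ Finset.range (min s l + 1),
    (-1 : ℝ) ^ j * 3 ^ (l - j) * (s.choose j : ℝ) * ((N - s).choose (l - j) : ℝ)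

lemma pauliWeight_le (N : ℕ) (γ : Fin N → Fin 4) : pauliWeight N γ ≤ N := by
  classical
  calc pauliWeight N γ ≤ (Finset.univ : Finset (Fin N)).card := Finset.card_filter_le _ _
  _ = N := by simp

lemma coeff_linear_pow (a b : ℝ) (m l : ℕ) :
    ((Polynomial.C a * Polynomial.X + Polynomial.C b) ^ m).coeff l
      = (m.choose l : ℝ) * a ^ l * b ^ (m - l) := by
  rw [add_pow, Polynomial.finset_sum_coeff]
  have hterm : ∀ k ∈ Finset.range (m + 1),
      ((Polynomial.C a * Polynomial.X) ^ k * Polynomial.C b ^ (m - k) * ((m.choose k : ℕ) : ℝ[X])).coeff l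
        = (if l = k then (m.choose k : ℝ) * a ^ k * b ^ (m - k) else 0) := by
    intro k _
    have : (Polynomial.C a * Polynomial.X) ^ k * Polynomial.C b ^ (m - k) * ((m.choose k : ℕ) : ℝ[X])
        = Polynomial.C (a ^ k * b ^ (m - k) * (m.choose k : ℝ)) * Polynomial.X ^ k := by
      rw [mul_pow, ← Polynomial.C_pow, ← Polynomial.C_pow, ← Polynomial.C_eq_natCast,
        Polynomial.C_mul, Polynomial.C_mul]
      ring
    rw [this, Polynomial.coeff_C_mul, Polynomial.coeff_X_pow]
    by_cases h : l = k <;> simp [h] <;> ring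
  rw [Finset.sum_congr rfl hterm]
  by_cases hl : l ≤ m
  · rw [Finset.sum_ite_eq (Finset.range (m + 1)) l
      (fun k => (m.choose k : ℝ) * a ^ k * b ^ (m - k))]
    simp [Finset.mem_range, Nat.lt_succ_of_le hl]
  · have h0 : ∀ k ∈ Finset.range (m + 1),
        (if l = k then (m.choose k : ℝ) * a ^ k * b ^ (m - k) else 0) = 0 := by
      intro k hk
      rw [Finset.mem_range] at hk
      have : l ≠ k := by omega
      simp [this]
    rw [Finset.sum_congr rfl h0, Finset.sum_const, smul_zero]
    rw [Nat.choose_eq_zero_of_lt (by omega)]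
    simp

lemma site_gen (b : Fin 4) :
    ∑ x : Fin 4, Polynomial.C (eps x b) * Polynomial.X ^ (if x ≠ 0 then 1 else 0)
      = if b = 0 then Polynomial.C (3:ℝ) * Polynomial.X + Polynomial.C 1
        else Polynomial.C (-1:ℝ) * Polynomial.X + Polynomial.C 1 := by
  fin_cases b <;>
    · rw [Fin.sum_univ_four]
      norm_num [eps, Fin.ext_iff]
      try simp (config := { decide := true })
      try simp [map_ofNat]
      try ring

lemma gen_poly (N : ℕ) (β : Fin N → Fin 4) :
    ∑ γ : Fin N → Fin 4,
        Polynomial.C (∏ i, eps (γ i) (β i)) * Polynomial.X ^ pauliWeight N γ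
      = (Polynomial.C (-1:ℝ) * Polynomial.X + Polynomial.C 1) ^ pauliWeight N β
        * (Polynomial.C (3:ℝ) * Polynomial.X + Polynomial.C 1) ^ (N - pauliWeight N β) := by
  classical
  have h1 : ∀ γ : Fin N → Fin 4,
      Polynomial.C (∏ i, eps (γ i) (β i)) * Polynomial.X ^ pauliWeight N γ
        = ∏ i, (Polynomial.C (eps (γ i) (β i)) * Polynomial.X ^ (if γ i ≠ 0 then 1 else 0)) := by
    intro γ
    rw [Finset.prod_mul_distrib, map_prod, Finset.prod_pow_eq_pow_sum]
    congr 1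
    rw [pauliWeight, Finset.card_filter]
  rw [Finset.sum_congr rfl fun γ _ => h1 γ]
  rw [show (Finset.univ : Finset (Fin N → Fin 4)) = Fintype.piFinset (fun _ => Finset.univ) by
    simp]
  have hps := Finset.prod_univ_sum (ι := Fin N) (κ := fun _ => Fin 4)
    (fun _ => (Finset.univ : Finset (Fin 4)))
    (fun i x => Polynomial.C (eps x (β i)) * Polynomial.X ^ (if x ≠ 0 then 1 else 0))
  rw [← hps]
  rw [Finset.prod_congr rfl fun i (_ : i ∈ Finset.univ) => site_gen (β i)]
  rw [Finset.prod_ite (fun _ => Polynomial.C (3:ℝ) * Polynomial.X + Polynomial.C 1)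
    (fun _ => Polynomial.C (-1:ℝ) * Polynomial.X + Polynomial.C 1)]
  rw [Finset.prod_const, Finset.prod_const]
  have hcard : (Finset.univ.filter fun i : Fin N => ¬ β i = 0).card = pauliWeight N β := by
    rw [pauliWeight]
  have hcard2 : (Finset.univ.filter fun i : Fin N => β i = 0).card = N - pauliWeight N β := by
    have := Finset.card_filter_add_card_filter_not
      (s := (Finset.univ : Finset (Fin N))) (p := fun i => β i = 0)
    simp only [Finset.card_univ, Fintype.card_fin] at this
    rw [hcard] at this
    omega
  rw [hcard, hcard2, mul_comm]

lemma cval_coeff (N s l : ℕ) :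
    ((Polynomial.C (-1:ℝ) * Polynomial.X + Polynomial.C 1) ^ s
      * (Polynomial.C (3:ℝ) * Polynomial.X + Polynomial.C 1) ^ (N - s)).coeff l
      = cval N s l := by
  rw [Polynomial.coeff_mul, Finset.Nat.sum_antidiagonal_eq_sum_range_succ_mk]
  simp only [coeff_linear_pow]
  have h1 : ∀ k ∈ Finset.range l.succ,
      (s.choose k : ℝ) * (-1) ^ k * 1 ^ (s - k)
        * (((N - s).choose (l - k) : ℝ) * 3 ^ (l - k) * 1 ^ (N - s - (l - k)))
        = (-1 : ℝ) ^ k * 3 ^ (l - k) * (s.choose k : ℝ) * ((N - s).choose (l - k) : ℝ) := by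
    intro k _
    ring
  rw [Finset.sum_congr rfl h1, cval]
  rw [← Finset.sum_subset (Finset.range_subset_range.mpr (by omega : min s l + 1 ≤ l.succ))]
  intro k hk hnk
  rw [Finset.mem_range] at hk hnk
  rw [Nat.choose_eq_zero_of_lt (by omega : s < k)]
  ring

lemma fiber_eq (N : ℕ) (β : Fin N → Fin 4) (l : ℕ) :
    ∑ γ : Fin N → Fin 4,
        (if pauliWeight N γ = l then ∏ i, eps (γ i) (β i) else 0)
      = cval N (pauliWeight N β) l := by
  have h := congrArg (fun p : Polynomial ℝ => p.coeff l) (gen_poly N β)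
  simp only [Polynomial.finset_sum_coeff, Polynomial.coeff_C_mul,
    Polynomial.coeff_X_pow, cval_coeff] at h
  rw [← h]
  refine Finset.sum_congr rfl fun γ _ => ?_
  by_cases hw : pauliWeight N γ = l
  · simp [hw]
  · simp [hw, Ne.symm hw]

lemma weighted_eps_sum (N : ℕ) (w : ℕ → ℝ) (β : Fin N → Fin 4) :
    ∑ γ : Fin N → Fin 4, w (pauliWeight N γ) * ∏ i, eps (γ i) (β i)
      = ∑ l ∈ Finset.range (N + 1), w l * cval N (pauliWeight N β) l := by
  rw [Finset.sum_congr rfl (fun l (_ : l ∈ Finset.range (N + 1)) => by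
    rw [← fiber_eq N β l, Finset.mul_sum])]
  rw [Finset.sum_comm]
  refine Finset.sum_congr rfl fun γ _ => ?_
  have hmem : pauliWeight N γ ∈ Finset.range (N + 1) :=
    Finset.mem_range.mpr (Nat.lt_succ_of_le (pauliWeight_le N γ))
  rw [show (fun l => w l * (if pauliWeight N γ = l then ∏ i, eps (γ i) (β i) else 0))
      = fun l => (if pauliWeight N γ = l then w l * ∏ i, eps (γ i) (β i) else 0) from ?_]
  · rw [Finset.sum_ite_eq (Finset.range (N + 1)) (pauliWeight N γ)
      (fun l => w l * ∏ i, eps (γ i) (β i))]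
    simp [hmem]
  · funext l
    by_cases hw : pauliWeight N γ = l <;> simp [hw]

lemma pauliWeight_zero (N : ℕ) : pauliWeight N (fun _ => (0 : Fin 4)) = 0 := by
  simp [pauliWeight]

lemma count_sum (N : ℕ) (g : ℕ → ℝ) :
    ∑ β : Fin N → Fin 4, g (pauliWeight N β)
      = ∑ s ∈ Finset.range (N + 1), (N.choose s : ℝ) * 3 ^ s * g s := by
  classical
  have hfib : ∀ s : ℕ,
      (∑ β : Fin N → Fin 4, if pauliWeight N β = s then (1 : ℝ) else 0)
        = (N.choose s : ℝ) * 3 ^ s := by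
    intro s
    have h := fiber_eq N (fun _ => (0 : Fin 4)) s
    have heps : ∀ γ : Fin N → Fin 4, (∏ i, eps (γ i) ((fun _ => (0 : Fin 4)) i)) = 1 := by
      intro γ
      refine Finset.prod_eq_one fun i _ => ?_
      simp [eps]
    rw [Finset.sum_congr rfl fun γ _ => by rw [heps γ]] at h
    rw [h, pauliWeight_zero, cval]
    simp [Nat.min_eq_left (Nat.zero_le s)]
    ring
  calc ∑ β : Fin N → Fin 4, g (pauliWeight N β)
      = ∑ β : Fin N → Fin 4, ∑ s ∈ Finset.range (N + 1),
          (if pauliWeight N β = s then g s else 0) := by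
        refine Finset.sum_congr rfl fun β _ => ?_
        rw [Finset.sum_ite_eq (Finset.range (N + 1)) (pauliWeight N β) g]
        simp [Finset.mem_range.mpr (Nat.lt_succ_of_le (pauliWeight_le N β))]
    _ = ∑ s ∈ Finset.range (N + 1), ∑ β : Fin N → Fin 4,
          (if pauliWeight N β = s then g s else 0) := Finset.sum_comm
    _ = ∑ s ∈ Finset.range (N + 1), (N.choose s : ℝ) * 3 ^ s * g s := by
        refine Finset.sum_congr rfl fun s _ => ?_
        have : ∑ β : Fin N → Fin 4, (if pauliWeight N β = s then g s else 0)
            = (∑ β : Fin N → Fin 4, if pauliWeight N β = s then (1:ℝ) else 0) * g s := by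
          rw [Finset.sum_mul]
          refine Finset.sum_congr rfl fun β _ => ?_
          by_cases hw : pauliWeight N β = s <;> simp [hw]
        rw [this, hfib]

noncomputable def lamB (N : ℕ) (w : ℕ → ℝ) (s : ℕ) : ℝ :=
  ∑ l ∈ Finset.range (N + 1), w l * cval N s l

noncomputable def Abig (N : ℕ) :
    Matrix ((Fin N → Fin 2) × (Fin N → Fin 2)) (Fin N → Fin 4) ℂ :=
  Matrix.of fun p β => pauliString N β p.1 p.2

noncomputable def Bbig (N : ℕ) :
    Matrix (Fin N → Fin 4) ((Fin N → Fin 2) × (Fin N → Fin 2)) ℂ :=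
  Matrix.of fun β p => (starRingEnd ℂ) (pauliString N β p.1 p.2) * ((2 : ℂ) ^ N)⁻¹

noncomputable def Dbig (N : ℕ) (w : ℕ → ℝ) : Matrix (Fin N → Fin 4) (Fin N → Fin 4) ℂ :=
  Matrix.diagonal fun β => ((lamB N w (pauliWeight N β) : ℝ) : ℂ)

noncomputable def Mbig (N : ℕ) (w : ℕ → ℝ) :
    Matrix ((Fin N → Fin 2) × (Fin N → Fin 2)) ((Fin N → Fin 2) × (Fin N → Fin 2)) ℂ :=
  ∑ a : Fin N → Fin 4, ((w (pauliWeight N a) : ℝ) : ℂ) •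
    Matrix.kroneckerMap (· * ·) (pauliString N a) ((pauliString N a).map (starRingEnd ℂ))

lemma orth_key (N : ℕ) (β γ : Fin N → Fin 4) :
    ∑ r : Fin N → Fin 2, ∑ c : Fin N → Fin 2,
        (starRingEnd ℂ) (∏ i, pauli (β i) (r i) (c i)) * ∏ i, pauli (γ i) (r i) (c i)
      = if β = γ then (2 : ℂ) ^ N else 0 := by
  classical
  have hpi2 : (Finset.univ : Finset (Fin N → Fin 2))
      = Fintype.piFinset (fun _ => Finset.univ) := by simp
  have h1 : ∀ r : Fin N → Fin 2,
      (∑ c : Fin N → Fin 2,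
        (starRingEnd ℂ) (∏ i, pauli (β i) (r i) (c i)) * ∏ i, pauli (γ i) (r i) (c i))
        = ∏ i, ∑ b : Fin 2, (starRingEnd ℂ) (pauli (β i) (r i) b) * pauli (γ i) (r i) b := by
    intro r
    have hps := Finset.prod_univ_sum (ι := Fin N) (κ := fun _ => Fin 2)
      (fun _ => (Finset.univ : Finset (Fin 2)))
      (fun i b => (starRingEnd ℂ) (pauli (β i) (r i) b) * pauli (γ i) (r i) b)
    rw [hps]
    rw [← hpi2]
    refine Finset.sum_congr rfl fun c _ => ?_
    rw [map_prod, Finset.prod_mul_distrib]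
  rw [Finset.sum_congr rfl fun r _ => h1 r]
  have hps2 := Finset.prod_univ_sum (ι := Fin N) (κ := fun _ => Fin 2)
    (fun _ => (Finset.univ : Finset (Fin 2)))
    (fun i a => ∑ b : Fin 2, (starRingEnd ℂ) (pauli (β i) a b) * pauli (γ i) a b)
  rw [hpi2, ← hps2]
  rw [Finset.prod_congr rfl fun i (_ : i ∈ Finset.univ) => site_C3 (β i) (γ i)]
  by_cases h : β = γ
  · subst h
    simp [Finset.prod_const]
  · rw [if_neg h]
    obtain ⟨i, hi⟩ : ∃ i, β i ≠ γ i := by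
      by_contra hall
      push_neg at hall
      exact h (funext hall)
    exact Finset.prod_eq_zero (Finset.mem_univ i) (by simp [hi])

lemma BA_one (N : ℕ) : Bbig N * Abig N = 1 := by
  classical
  ext β γ
  rw [Matrix.mul_apply, Fintype.sum_prod_type]
  simp only [Bbig, Abig, Matrix.of_apply, pauliString]
  have h1 : ∀ r c : Fin N → Fin 2,
      (starRingEnd ℂ) (∏ i, pauli (β i) (r i) (c i)) * ((2 : ℂ) ^ N)⁻¹
          * ∏ i, pauli (γ i) (r i) (c i)
        = ((starRingEnd ℂ) (∏ i, pauli (β i) (r i) (c i))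
            * ∏ i, pauli (γ i) (r i) (c i)) * ((2 : ℂ) ^ N)⁻¹ := by
    intro r c; ring
  rw [Finset.sum_congr rfl fun r _ => Finset.sum_congr rfl fun c _ => h1 r c]
  rw [Finset.sum_congr rfl fun r (_ : r ∈ Finset.univ) => (Finset.sum_mul _ _ _).symm,
    ← Finset.sum_mul, orth_key N β γ]
  by_cases h : β = γ
  · rw [if_pos h, h, Matrix.one_apply_eq]
    rw [mul_inv_cancel₀ (pow_ne_zero _ two_ne_zero)]
  · rw [if_neg h, Matrix.one_apply_ne h, zero_mul]

lemma key2 (N : ℕ) (γ : Fin N → Fin 4) (r r' c c' : Fin N → Fin 2) :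
    ∑ β : Fin N → Fin 4,
        (∏ i, ((eps (γ i) (β i) : ℝ) : ℂ)) *
          ((∏ i, pauli (β i) (r i) (r' i)) *
            (starRingEnd ℂ) (∏ i, pauli (β i) (c i) (c' i)))
      = (2 : ℂ) ^ N * ((∏ i, pauli (γ i) (r i) (c i)) *
          (starRingEnd ℂ) (∏ i, pauli (γ i) (r' i) (c' i))) := by
  classical
  have h1 : ∀ β : Fin N → Fin 4,
      (∏ i, ((eps (γ i) (β i) : ℝ) : ℂ)) *
          ((∏ i, pauli (β i) (r i) (r' i)) *
            (starRingEnd ℂ) (∏ i, pauli (β i) (c i) (c' i)))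
        = ∏ i, (((eps (γ i) (β i) : ℝ) : ℂ) *
            (pauli (β i) (r i) (r' i) * (starRingEnd ℂ) (pauli (β i) (c i) (c' i)))) := by
    intro β
    rw [map_prod, ← Finset.prod_mul_distrib, ← Finset.prod_mul_distrib]
  rw [Finset.sum_congr rfl fun β _ => h1 β]
  have hpi4 : (Finset.univ : Finset (Fin N → Fin 4))
      = Fintype.piFinset (fun _ => Finset.univ) := by simp
  have hps := Finset.prod_univ_sum (ι := Fin N) (κ := fun _ => Fin 4)
    (fun _ => (Finset.univ : Finset (Fin 4)))
    (fun i x => ((eps (γ i) x : ℝ) : ℂ) *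
      (pauli x (r i) (r' i) * (starRingEnd ℂ) (pauli x (c i) (c' i))))
  rw [hpi4, ← hps]
  rw [Finset.prod_congr rfl fun i (_ : i ∈ Finset.univ) =>
    site_C2 (γ i) (r i) (r' i) (c i) (c' i)]
  rw [Finset.prod_mul_distrib, Finset.prod_const, Finset.prod_mul_distrib, map_prod]
  simp

lemma M_eq (N : ℕ) (w : ℕ → ℝ) : Mbig N w = Abig N * Dbig N w * Bbig N := by
  classical
  rw [Matrix.mul_assoc]
  ext p q
  obtain ⟨r, r'⟩ := p
  obtain ⟨c, c'⟩ := q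
  rw [Matrix.mul_apply]
  have hDB : ∀ β, (Dbig N w * Bbig N) β (c, c')
      = ((lamB N w (pauliWeight N β) : ℝ) : ℂ) *
          ((starRingEnd ℂ) (∏ i, pauli (β i) (c i) (c' i)) * ((2 : ℂ) ^ N)⁻¹) := by
    intro β
    rw [Dbig, Matrix.diagonal_mul]
    simp only [Bbig, Matrix.of_apply, pauliString]
  rw [Finset.sum_congr rfl fun β _ => by rw [hDB β]]
  symm
  have hlam : ∀ β : Fin N → Fin 4,
      ((lamB N w (pauliWeight N β) : ℝ) : ℂ)
        = ∑ γ' : Fin N → Fin 4, ((w (pauliWeight N γ') : ℝ) : ℂ) *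
            ∏ i, ((eps (γ' i) (β i) : ℝ) : ℂ) := by
    intro β
    rw [show lamB N w (pauliWeight N β)
        = ∑ γ' : Fin N → Fin 4, w (pauliWeight N γ') * ∏ i, eps (γ' i) (β i) from
      (weighted_eps_sum N w β).symm]
    push_cast
    rfl
  calc ∑ β : Fin N → Fin 4, Abig N (r, r') β *
        (((lamB N w (pauliWeight N β) : ℝ) : ℂ) *
          ((starRingEnd ℂ) (∏ i, pauli (β i) (c i) (c' i)) * ((2 : ℂ) ^ N)⁻¹))
      = ∑ β : Fin N → Fin 4, ∑ γ' : Fin N → Fin 4,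
          ((w (pauliWeight N γ') : ℝ) : ℂ) * ((2 : ℂ) ^ N)⁻¹ *
            ((∏ i, ((eps (γ' i) (β i) : ℝ) : ℂ)) *
              ((∏ i, pauli (β i) (r i) (r' i)) *
                (starRingEnd ℂ) (∏ i, pauli (β i) (c i) (c' i)))) := by
        refine Finset.sum_congr rfl fun β _ => ?_
        rw [hlam β, Finset.sum_mul, Finset.mul_sum]
        refine Finset.sum_congr rfl fun γ' _ => ?_
        simp only [Abig, Matrix.of_apply, pauliString]
        ring
    _ = ∑ γ' : Fin N → Fin 4,
          ((w (pauliWeight N γ') : ℝ) : ℂ) * ((2 : ℂ) ^ N)⁻¹ *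
            ∑ β : Fin N → Fin 4,
              ((∏ i, ((eps (γ' i) (β i) : ℝ) : ℂ)) *
                ((∏ i, pauli (β i) (r i) (r' i)) *
                  (starRingEnd ℂ) (∏ i, pauli (β i) (c i) (c' i)))) := by
        rw [Finset.sum_comm]
        exact Finset.sum_congr rfl fun γ' _ => (Finset.mul_sum _ _ _).symm
    _ = ∑ γ' : Fin N → Fin 4,
          ((w (pauliWeight N γ') : ℝ) : ℂ) *
            ((∏ i, pauli (γ' i) (r i) (c i)) *
              (starRingEnd ℂ) (∏ i, pauli (γ' i) (r' i) (c' i))) := by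
        refine Finset.sum_congr rfl fun γ' _ => ?_
        rw [key2 N γ' r r' c c']
        have h2 : ((2 : ℂ) ^ N)⁻¹ * (2 : ℂ) ^ N = 1 :=
          inv_mul_cancel₀ (pow_ne_zero _ two_ne_zero)
        calc ((w (pauliWeight N γ') : ℝ) : ℂ) * ((2 : ℂ) ^ N)⁻¹ *
              ((2 : ℂ) ^ N * ((∏ i, pauli (γ' i) (r i) (c i)) *
                (starRingEnd ℂ) (∏ i, pauli (γ' i) (r' i) (c' i))))
            = ((w (pauliWeight N γ') : ℝ) : ℂ) * ((((2 : ℂ) ^ N)⁻¹ * (2 : ℂ) ^ N) *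
                ((∏ i, pauli (γ' i) (r i) (c i)) *
                  (starRingEnd ℂ) (∏ i, pauli (γ' i) (r' i) (c' i)))) := by ring
          _ = _ := by rw [h2, one_mul]
    _ = Mbig N w (r, r') (c, c') := by
        simp only [Mbig, Matrix.sum_apply, Matrix.smul_apply, Matrix.kroneckerMap_apply,
          Matrix.map_apply, smul_eq_mul, Matrix.of_apply, pauliString]

lemma ofFn_prod_kron {m l : Type*} [Fintype m] [DecidableEq m] [Fintype l] [DecidableEq l] :
    ∀ (n : ℕ) (f : Fin n → Matrix m m ℂ) (g : Fin n → Matrix l l ℂ),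
      (List.ofFn fun k => Matrix.kroneckerMap (· * ·) (f k) (g k)).prod
        = Matrix.kroneckerMap (· * ·) (List.ofFn f).prod (List.ofFn g).prod
  | 0, f, g => by
      simp only [List.ofFn_zero, List.prod_nil]
      exact (Matrix.one_kronecker_one (α := ℂ)).symm
  | (n+1), f, g => by
      rw [List.ofFn_succ, List.ofFn_succ (f := f), List.ofFn_succ (f := g)]
      simp only [List.prod_cons]
      rw [ofFn_prod_kron n _ _, ← Matrix.mul_kronecker_mul]

lemma ofFn_prod_smul {m : Type*} [Fintype m] [DecidableEq m] :
    ∀ (n : ℕ) (cs : Fin n → ℂ) (f : Fin n → Matrix m m ℂ),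
      (List.ofFn fun k => cs k • f k).prod = (∏ k, cs k) • (List.ofFn f).prod
  | 0, cs, f => by simp
  | (n+1), cs, f => by
      rw [List.ofFn_succ, List.ofFn_succ (f := f)]
      simp only [List.prod_cons]
      rw [ofFn_prod_smul n _ _, Fin.prod_univ_succ, smul_mul_assoc, mul_smul_comm,
        smul_smul]

lemma sum_pow_ofFn {m : Type*} [Fintype m] [DecidableEq m] {W : Type*} [Fintype W] [DecidableEq W] :
    ∀ (n : ℕ) (F : W → Matrix m m ℂ),
      (∑ a, F a) ^ n = ∑ α : Fin n → W, (List.ofFn fun k => F (α k)).prod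
  | 0, F => by simp
  | (n+1), F => by
      rw [pow_succ', sum_pow_ofFn n F]
      rw [← Equiv.sum_comp (Fin.consEquiv fun _ : Fin (n+1) => W)
        (fun α : Fin (n+1) → W => (List.ofFn fun k => F (α k)).prod)]
      rw [Fintype.sum_prod_type]
      have hterm : ∀ (x : W) (xs : Fin n → W),
          (List.ofFn fun k => F ((Fin.consEquiv fun _ : Fin (n+1) => W) (x, xs) k)).prod
            = F x * (List.ofFn fun k => F (xs k)).prod := by
        intro x xs
        simp [Fin.consEquiv, List.ofFn_succ]
      rw [Finset.sum_congr rfl fun x (_ : x ∈ Finset.univ) =>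
        Finset.sum_congr rfl fun xs _ => hterm x xs]
      rw [Finset.sum_congr rfl fun x (_ : x ∈ Finset.univ) => (Finset.mul_sum _ _ _).symm,
        ← Finset.sum_mul]

lemma conj_trace_ofFn {m : Type*} [Fintype m] [DecidableEq m] (n : ℕ)
    (f : Fin n → Matrix m m ℂ) :
    (starRingEnd ℂ) (Matrix.trace (List.ofFn f).prod)
      = Matrix.trace (List.ofFn fun k => (f k).map (starRingEnd ℂ)).prod := by
  have h1 : ∀ A : Matrix m m ℂ,
      (starRingEnd ℂ) (Matrix.trace A) = Matrix.trace (A.map (starRingEnd ℂ)) := by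
    intro A
    simp [Matrix.trace, Matrix.diag, map_sum, Matrix.map_apply]
  rw [h1, ← RingHom.mapMatrix_apply, map_list_prod, List.map_ofFn]
  congr 1

lemma lhs_trace (N n : ℕ) (w : ℕ → ℝ) :
    ∑ α : Fin n → (Fin N → Fin 4),
        (∏ k, ((w (pauliWeight N (α k)) : ℝ) : ℂ)) *
          (Matrix.trace ((List.ofFn fun k => pauliString N (α k)).prod) *
            (starRingEnd ℂ) (Matrix.trace ((List.ofFn fun k => pauliString N (α k)).prod)))
      = Matrix.trace (Mbig N w ^ n) := by
  classical
  rw [Mbig, sum_pow_ofFn, Matrix.trace_sum]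
  refine Finset.sum_congr rfl fun α _ => ?_
  rw [conj_trace_ofFn]
  rw [ofFn_prod_smul n (fun k => ((w (pauliWeight N (α k)) : ℝ) : ℂ))
    (fun k => Matrix.kroneckerMap (· * ·) (pauliString N (α k))
      ((pauliString N (α k)).map (starRingEnd ℂ)))]
  rw [Matrix.trace_smul, smul_eq_mul]
  rw [ofFn_prod_kron]
  rw [show Matrix.kroneckerMap (· * ·) (List.ofFn fun k => pauliString N (α k)).prod
      (List.ofFn fun k => (pauliString N (α k)).map (starRingEnd ℂ)).prod
    = (List.ofFn fun k => pauliString N (α k)).prod ⊗ₖ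
      (List.ofFn fun k => (pauliString N (α k)).map (starRingEnd ℂ)).prod from rfl]
  rw [Matrix.trace_kronecker]

theorem brownian_spin_cluster_moment (N n : ℕ) (hn : 1 ≤ n) (w : ℕ → ℝ) :
    ∑ α : Fin n → (Fin N → Fin 4),
        (∏ k, w (pauliWeight N (α k))) *
          Complex.normSq
            (Matrix.trace ((List.ofFn fun k => pauliString N (α k)).prod))
      = ∑ s ∈ Finset.range (N + 1), (N.choose s : ℝ) * 3 ^ s *
          (∑ l ∈ Finset.range (N + 1), w l *
              ∑ j ∈ Finset.range (min s l + 1),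
                (-1 : ℝ) ^ j * 3 ^ (l - j) * (s.choose j : ℝ)
                  * ((N - s).choose (l - j) : ℝ)) ^ n := by
  classical
  have hpow : (Abig N * Dbig N w * Bbig N) ^ n = Abig N * Dbig N w ^ n * Bbig N := by
    induction n, hn using Nat.le_induction with
    | base => simp
    | succ m hm ih =>
        rw [pow_succ, ih, pow_succ]
        calc Abig N * Dbig N w ^ m * Bbig N * (Abig N * Dbig N w * Bbig N)
            = Abig N * (Dbig N w ^ m * ((Bbig N * Abig N) * (Dbig N w * Bbig N))) := by
              simp only [Matrix.mul_assoc]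
          _ = Abig N * (Dbig N w ^ m * Dbig N w) * Bbig N := by
              rw [BA_one, Matrix.one_mul]
              simp only [Matrix.mul_assoc]
  apply Complex.ofReal_injective
  push_cast
  simp only [← Complex.mul_conj]
  rw [lhs_trace N n w, M_eq, hpow]
  rw [Matrix.mul_assoc, Matrix.trace_mul_comm, Matrix.mul_assoc, BA_one, Matrix.mul_one]
  rw [Dbig, Matrix.diagonal_pow, Matrix.trace_diagonal]
  calc ∑ β : Fin N → Fin 4, ((lamB N w (pauliWeight N β) : ℝ) : ℂ) ^ n
      = ((∑ β : Fin N → Fin 4, lamB N w (pauliWeight N β) ^ n : ℝ) : ℂ) := by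
        push_cast
        rfl
    _ = ((∑ s ∈ Finset.range (N + 1), (N.choose s : ℝ) * 3 ^ s * lamB N w s ^ n : ℝ) : ℂ) := by
        rw [count_sum N (fun s => lamB N w s ^ n)]
    _ = _ := by
        simp only [lamB, cval]
        push_cast
        rfl
end

section
/- Let N, d : ℕ and let ψ : Fin N → Matrix (Fin d) (Fin d) ℂ satisfy the Majorana (Clifford) relations: ψ i * ψ j + ψ j * ψ i = 0 for i ≠ j, and ψ i * ψ i = 1 for every i. Let q be an even natural number and let A ⊆ Fin N be a finite set of cardinality s. Then Σ over all B ⊆ Fin N with |B| = q of the matrix (Ψ A − (−1)^{q(q−1)/2} • (Ψ B * Ψ A * Ψ B)) equals (Σ_{m = 0}^{q} (s.choose m) · ((N − s).choose (q − m)) · (1 − (−1)^m)) • Ψ A. In particular every Majorana string Ψ A is an eigenvector of the two-replica effective Hamiltonian of the Brownian SYK model, with eigenvalue E(s) = J Σ_{m} C(s,m) C(N−s, q−m) (1 − (−1)^m) depending only on the length s. -/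
/-- The Majorana string associated to a finite set `A`: the ordered product of the
`ψ i` over `i ∈ A`, taken in increasing order (with `Ψ ∅ = 1`). -/
noncomputable def majoranaString {N d : ℕ} (ψ : Fin N → Matrix (Fin d) (Fin d) ℂ)
    (A : Finset (Fin N)) : Matrix (Fin d) (Fin d) ℂ :=
  ((A.sort (· ≤ ·)).map ψ).prod

namespace MajAux
variable {N d : ℕ} {ψ : Fin N → Matrix (Fin d) (Fin d) ℂ}

lemma comm_single (hanti : ∀ i j, i ≠ j → ψ i * ψ j + ψ j * ψ i = 0)
    (i : Fin N) (l : List (Fin N)) :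
    ψ i * (l.map ψ).prod
      = (-1:ℂ) ^ ((l.filter (· ≠ i)).length) • ((l.map ψ).prod * ψ i) := by
  induction l with
  | nil => simp
  | cons j t ih =>
    simp only [List.map_cons, List.prod_cons]
    by_cases hji : j = i
    · subst hji
      rw [List.filter_cons_of_neg (by simp)]
      calc ψ j * (ψ j * (t.map ψ).prod)
          = ψ j * ((-1:ℂ) ^ ((t.filter (· ≠ j)).length) • ((t.map ψ).prod * ψ j)) := by rw [ih]
        _ = (-1:ℂ) ^ ((t.filter (· ≠ j)).length) • (ψ j * (t.map ψ).prod * ψ j) := by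
              rw [mul_smul_comm, mul_assoc]
    · rw [List.filter_cons_of_pos (by simpa using hji), List.length_cons]
      have hij : ψ i * ψ j = -(ψ j * ψ i) := eq_neg_of_add_eq_zero_left (hanti i j (Ne.symm hji))
      calc ψ i * (ψ j * (t.map ψ).prod) = (ψ i * ψ j) * (t.map ψ).prod := by rw [mul_assoc]
        _ = -(ψ j * (ψ i * (t.map ψ).prod)) := by rw [hij]; simp [mul_assoc]
        _ = -(ψ j * ((-1:ℂ) ^ ((t.filter (· ≠ i)).length) • ((t.map ψ).prod * ψ i))) := by rw [ih]
        _ = (-1:ℂ) ^ ((t.filter (· ≠ i)).length + 1) • (ψ j * (t.map ψ).prod * ψ i) := by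
              rw [mul_smul_comm, pow_succ]
              simp [mul_assoc]

lemma sq_list (hanti : ∀ i j, i ≠ j → ψ i * ψ j + ψ j * ψ i = 0)
    (hsq : ∀ i, ψ i * ψ i = 1) (l : List (Fin N)) (hl : l.Nodup) :
    (l.map ψ).prod * (l.map ψ).prod
      = (-1:ℂ) ^ (l.length * (l.length - 1) / 2) • 1 := by
  induction l with
  | nil => simp
  | cons i t ih =>
    have hit : i ∉ t := (List.nodup_cons.mp hl).1
    have htn : t.Nodup := (List.nodup_cons.mp hl).2
    have hfil : t.filter (· ≠ i) = t := by
      apply List.filter_eq_self.mpr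
      intro a ha
      simp only [ne_eq, decide_eq_true_eq]
      exact fun h => hit (h ▸ ha)
    have hcomm := comm_single hanti i t
    rw [hfil] at hcomm
    have h1 : (t.map ψ).prod * ψ i = (-1:ℂ) ^ t.length • (ψ i * (t.map ψ).prod) := by
      rw [hcomm, smul_smul, ← pow_add, (Even.add_self _).neg_one_pow, one_smul]
    simp only [List.map_cons, List.prod_cons, List.length_cons]
    calc ψ i * (t.map ψ).prod * (ψ i * (t.map ψ).prod)
        = ψ i * ((t.map ψ).prod * ψ i) * (t.map ψ).prod := by
          simp only [mul_assoc]
      _ = ψ i * ((-1:ℂ) ^ t.length • (ψ i * (t.map ψ).prod)) * (t.map ψ).prod := by rw [h1]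
      _ = (-1:ℂ) ^ t.length • (ψ i * ψ i * ((t.map ψ).prod * (t.map ψ).prod)) := by
          rw [mul_smul_comm, smul_mul_assoc]
          simp only [mul_assoc]
      _ = (-1:ℂ) ^ t.length • ((-1:ℂ) ^ (t.length * (t.length - 1) / 2) • 1) := by
          rw [hsq i, one_mul, ih htn]
      _ = (-1:ℂ) ^ ((t.length + 1) * (t.length + 1 - 1) / 2) • 1 := by
          rw [smul_smul, ← pow_add, Nat.triangle_succ, Nat.add_comm]

lemma comm_strings (hanti : ∀ i j, i ≠ j → ψ i * ψ j + ψ j * ψ i = 0)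
    (b a : List (Fin N)) :
    (b.map ψ).prod * (a.map ψ).prod
      = (-1:ℂ) ^ ((b.map (fun i => (a.filter (· ≠ i)).length)).sum)
          • ((a.map ψ).prod * (b.map ψ).prod) := by
  induction b with
  | nil => simp
  | cons i t ih =>
    simp only [List.map_cons, List.prod_cons, List.sum_cons]
    calc ψ i * (t.map ψ).prod * (a.map ψ).prod
        = ψ i * ((t.map ψ).prod * (a.map ψ).prod) := by rw [mul_assoc]
      _ = ψ i * ((-1:ℂ) ^ ((t.map (fun i => (a.filter (· ≠ i)).length)).sum)
            • ((a.map ψ).prod * (t.map ψ).prod)) := by rw [ih]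
      _ = (-1:ℂ) ^ ((t.map (fun i => (a.filter (· ≠ i)).length)).sum)
            • ((ψ i * (a.map ψ).prod) * (t.map ψ).prod) := by
          rw [mul_smul_comm]; simp only [mul_assoc]
      _ = (-1:ℂ) ^ ((a.filter (· ≠ i)).length + (t.map (fun i => (a.filter (· ≠ i)).length)).sum)
            • ((a.map ψ).prod * (ψ i * (t.map ψ).prod)) := by
          rw [comm_single hanti i a, smul_mul_assoc, smul_smul, ← pow_add, Nat.add_comm]
          simp only [mul_assoc]

lemma fiber_card (A : Finset (Fin N)) (q m : ℕ) (hm : m ≤ q) :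
    ((Finset.univ.filter (fun B : Finset (Fin N) => B.card = q)).filter
        (fun B => (A ∩ B).card = m)).card
      = A.card.choose m * ((N - A.card).choose (q - m)) := by
  have hc : (Aᶜ).card = N - A.card := by
    rw [Finset.card_compl, Fintype.card_fin]
  rw [← hc, ← Finset.card_powersetCard, ← Finset.card_powersetCard, ← Finset.card_product]
  apply Finset.card_bij' (fun B _ => (A ∩ B, B \ A)) (fun p _ => p.1 ∪ p.2)
  · intro B hB
    simp only [Finset.mem_filter, Finset.mem_univ, true_and] at hB
    obtain ⟨hBq, hBm⟩ := hB
    have h1 := Finset.card_inter_add_card_sdiff B A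
    rw [Finset.inter_comm] at hBm
    simp only [Finset.mem_product, Finset.mem_powersetCard]
    refine ⟨⟨Finset.inter_subset_left, by rwa [Finset.inter_comm]⟩, ⟨?_, by omega⟩⟩
    intro x hx
    simp only [Finset.mem_compl]
    exact (Finset.mem_sdiff.mp hx).2
  · intro p hp
    simp only [Finset.mem_product, Finset.mem_powersetCard] at hp
    obtain ⟨⟨hC, hCm⟩, hD, hDm⟩ := hp
    have haux : Disjoint A Aᶜ := disjoint_compl_right
    have hdisj : Disjoint p.1 p.2 := Disjoint.mono hC hD haux
    simp only [Finset.mem_filter, Finset.mem_univ, true_and]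
    constructor
    · rw [Finset.card_union_of_disjoint hdisj]; omega
    · have h1 : A ∩ (p.1 ∪ p.2) = p.1 := by
        rw [Finset.inter_union_distrib_left, Finset.inter_eq_right.mpr hC,
          Finset.disjoint_iff_inter_eq_empty.mp (haux.mono_right hD), Finset.union_empty]
      rw [h1, hCm]
  · intro B hB
    rw [Finset.inter_comm, Finset.union_comm, Finset.sdiff_union_inter]
  · intro p hp
    simp only [Finset.mem_product, Finset.mem_powersetCard] at hp
    obtain ⟨⟨hC, hCm⟩, hD, hDm⟩ := hp
    have haux : Disjoint A Aᶜ := disjoint_compl_right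
    have h1 : A ∩ (p.1 ∪ p.2) = p.1 := by
      rw [Finset.inter_union_distrib_left, Finset.inter_eq_right.mpr hC,
        Finset.disjoint_iff_inter_eq_empty.mp (haux.mono_right hD), Finset.union_empty]
    have h2 : (p.1 ∪ p.2) \ A = p.2 := by
      rw [Finset.union_sdiff_distrib, Finset.sdiff_eq_empty_iff_subset.mpr hC,
        Finset.empty_union, Finset.sdiff_eq_self_iff_disjoint.mpr (haux.mono_right hD).symm]
    rw [h1, h2]

lemma per_B (hanti : ∀ i j, i ≠ j → ψ i * ψ j + ψ j * ψ i = 0)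
    (hsq : ∀ i, ψ i * ψ i = 1) (q : ℕ) (hq : Even q) (A B : Finset (Fin N))
    (hB : B.card = q) :
    majoranaString ψ A - ((-1:ℂ) ^ (q * (q - 1) / 2)) •
        (majoranaString ψ B * majoranaString ψ A * majoranaString ψ B)
      = (1 - (-1:ℂ) ^ ((A ∩ B).card)) • majoranaString ψ A := by
  classical
  set a := A.sort (· ≤ ·) with ha
  set b := B.sort (· ≤ ·) with hb
  have hbl : b.length = q := by rw [hb, Finset.length_sort, hB]
  have hal : a.length = A.card := Finset.length_sort _
  have hbn : b.Nodup := Finset.sort_nodup _ _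
  set S := (b.map (fun i => (a.filter (· ≠ i)).length)).sum with hS
  have hsqB := sq_list hanti hsq b hbn
  rw [hbl] at hsqB
  -- per-element count fact
  have hkey : ∀ i : Fin N, (a.filter (· ≠ i)).length + (if i ∈ A then 1 else 0) = A.card := by
    intro i
    have h1 := List.length_eq_length_filter_add (l := a) (fun x => decide (x ≠ i))
    have h2 : (a.filter (fun x => !decide (x ≠ i))) = a.filter (fun x => x == i) := by
      apply List.filter_congr
      intro x _
      by_cases hxi : x = i <;> simp [hxi]
    have h3 : List.count i a = (a.filter (fun x => x == i)).length := by
      rw [List.count, List.countP_eq_length_filter]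
    have h4 : List.count i a = if i ∈ A then 1 else 0 := by
      rw [(Finset.sort_nodup _ _).count]
      simp [ha, Finset.mem_sort]
    rw [h2, ← h3, h4] at h1
    omega
  have hsum : ∀ (g : Fin N → ℕ), (b.map g).sum = ∑ i ∈ B, g i := by
    intro g
    rw [← Finset.sum_map_toList]
    exact ((Finset.sort_perm_toList (s := B) (r := (· ≤ ·))).map g).sum_eq
  have hm : (A ∩ B).card = ∑ i ∈ B, (if i ∈ A then 1 else 0) := by
    rw [Finset.inter_comm, ← Finset.filter_mem_eq_inter, Finset.card_filter]
  have hSm : S + (A ∩ B).card = q * A.card := by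
    rw [hS, hsum, hm, ← Finset.sum_add_distrib,
      Finset.sum_congr rfl (fun i _ => hkey i), Finset.sum_const, hB, smul_eq_mul]
  have hsign : (-1:ℂ) ^ S = (-1:ℂ) ^ ((A ∩ B).card) := by
    have h2 : (-1:ℂ) ^ (S + (A ∩ B).card) = 1 := by
      rw [hSm]
      exact (hq.mul_right _).neg_one_pow
    calc (-1:ℂ) ^ S = (-1:ℂ) ^ S * ((-1:ℂ) ^ ((A ∩ B).card) * (-1:ℂ) ^ ((A ∩ B).card)) := by
          rw [← pow_add, (Even.add_self _).neg_one_pow, mul_one]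
      _ = ((-1:ℂ) ^ (S + (A ∩ B).card)) * (-1:ℂ) ^ ((A ∩ B).card) := by
          rw [pow_add]; ring
      _ = (-1:ℂ) ^ ((A ∩ B).card) := by rw [h2, one_mul]
  have hmain : majoranaString ψ B * majoranaString ψ A * majoranaString ψ B
      = ((-1:ℂ) ^ S * (-1:ℂ) ^ (q * (q - 1) / 2)) • majoranaString ψ A := by
    show (b.map ψ).prod * (a.map ψ).prod * (b.map ψ).prod
        = ((-1:ℂ) ^ S * (-1:ℂ) ^ (q * (q - 1) / 2)) • (a.map ψ).prod
    rw [comm_strings hanti b a, ← hS, smul_mul_assoc, mul_assoc, hsqB,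
      mul_smul_comm, mul_one, smul_smul]
  rw [hmain, smul_smul]
  have hcoef : (-1:ℂ) ^ (q * (q - 1) / 2) * ((-1:ℂ) ^ S * (-1:ℂ) ^ (q * (q - 1) / 2))
      = (-1:ℂ) ^ ((A ∩ B).card) := by
    calc (-1:ℂ) ^ (q * (q - 1) / 2) * ((-1:ℂ) ^ S * (-1:ℂ) ^ (q * (q - 1) / 2))
        = (-1:ℂ) ^ S * ((-1:ℂ) ^ (q * (q - 1) / 2) * (-1:ℂ) ^ (q * (q - 1) / 2)) := by ring
      _ = (-1:ℂ) ^ S := by rw [← pow_add, (Even.add_self _).neg_one_pow, mul_one]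
      _ = (-1:ℂ) ^ ((A ∩ B).card) := hsign
  rw [hcoef, sub_smul, one_smul]

end MajAux

theorem majoranaString_eigenvector_of_effective_hamiltonian
    (N d : ℕ) (ψ : Fin N → Matrix (Fin d) (Fin d) ℂ)
    (hanti : ∀ i j, i ≠ j → ψ i * ψ j + ψ j * ψ i = 0)
    (hsq : ∀ i, ψ i * ψ i = 1)
    (q : ℕ) (hq : Even q) (A : Finset (Fin N)) :
    ∑ B ∈ Finset.univ.filter (fun B : Finset (Fin N) => B.card = q),
        (majoranaString ψ A
          - ((-1 : ℂ) ^ (q * (q - 1) / 2)) •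
              (majoranaString ψ B * majoranaString ψ A * majoranaString ψ B))
      = (∑ m ∈ Finset.range (q + 1),
            (A.card.choose m : ℤ) * ((N - A.card).choose (q - m) : ℤ)
              * (1 - (-1) ^ m)) •
          majoranaString ψ A := by
  classical
  rw [Finset.sum_congr rfl (fun B hB =>
    MajAux.per_B hanti hsq q hq A B (Finset.mem_filter.mp hB).2)]
  rw [← Finset.sum_smul, ← Int.cast_smul_eq_zsmul ℂ]
  congr 1
  have hmaps : ∀ B ∈ Finset.univ.filter (fun B : Finset (Fin N) => B.card = q),
      (A ∩ B).card ∈ Finset.range (q + 1) := by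
    intro B hB
    rw [Finset.mem_range, Nat.lt_succ_iff]
    calc (A ∩ B).card ≤ B.card := Finset.card_le_card Finset.inter_subset_right
      _ = q := (Finset.mem_filter.mp hB).2
  rw [← Finset.sum_fiberwise_of_maps_to hmaps (fun B => 1 - (-1:ℂ) ^ ((A ∩ B).card))]
  push_cast
  apply Finset.sum_congr rfl
  intro m hm
  rw [Finset.sum_congr rfl (fun B hB => by rw [(Finset.mem_filter.mp hB).2]),
    Finset.sum_const, MajAux.fiber_card A q m (Nat.lt_succ_iff.mp (Finset.mem_range.mp hm)),
    nsmul_eq_mul]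
  push_cast
  ring
end

section
/- Let d ≥ 1, let ε : Fin d → ℝ be injective, and let c > 0 be a real number. Then the real symmetric matrix K ∈ Matrix (Fin d) (Fin d) ℝ with entries K i j = Real.exp (−c · (ε i − ε j)²) is positive definite. -/
theorem gaussian_kernel_posDef (d : ℕ) (hd : 1 ≤ d) (ε : Fin d → ℝ)
    (hε : Function.Injective ε) (c : ℝ) (hc : 0 < c) :
    (Matrix.of fun i j : Fin d => Real.exp (-c * (ε i - ε j) ^ 2)).PosDef := by
  constructor
  · ext i j
    simp only [Matrix.conjTranspose_apply, Matrix.of_apply, star_trivial]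
    congr 1
    ring
  · intro x hx
    simp only [Finsupp.sum_fintype, mul_zero, zero_mul, Finsupp.sum_zero_index, implies_true,
      Matrix.of_apply, star_trivial]
    simp only [mul_assoc, ← Finset.mul_sum]
    rw [Finsupp.sum_fintype _ _ (fun _ => zero_mul _)]
    set v : Fin d → ℝ := fun i => x i * Real.exp (-c * ε i ^ 2) with hv
    set s : ℕ → ℝ := fun n => ∑ i, v i * ε i ^ n with hs
    set f : ℕ → ℝ := fun n =>
      (2 * c) ^ n / ((Nat.factorial n : ℕ) : ℝ) * (s n) ^ 2 with hf
    have key : ∀ n : ℕ, f n = ∑ i : Fin d, ∑ j : Fin d,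
        v i * v j * ((2 * c * (ε i * ε j)) ^ n / ((Nat.factorial n : ℕ) : ℝ)) := by
      intro n
      rw [hf]
      simp only [hs]
      rw [pow_two, Finset.sum_mul_sum, Finset.mul_sum]
      refine Finset.sum_congr rfl fun i _ => ?_
      rw [Finset.mul_sum]
      refine Finset.sum_congr rfl fun j _ => ?_
      rw [mul_pow, mul_pow]
      ring
    have hsummand : ∀ (i j : Fin d), Summable fun n : ℕ =>
        v i * v j * ((2 * c * (ε i * ε j)) ^ n / ((Nat.factorial n : ℕ) : ℝ)) :=
      fun i j => (Real.summable_pow_div_factorial (2 * c * (ε i * ε j))).mul_left _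
    have hsum : Summable f := by
      have : Summable fun n : ℕ => ∑ i : Fin d, ∑ j : Fin d,
          v i * v j * ((2 * c * (ε i * ε j)) ^ n / ((Nat.factorial n : ℕ) : ℝ)) :=
        summable_sum fun i _ => summable_sum fun j _ => hsummand i j
      exact this.congr fun n => (key n).symm
    have hexp : ∀ y : ℝ, Real.exp y = ∑' n : ℕ, y ^ n / ((Nat.factorial n : ℕ) : ℝ) := by
      intro y
      rw [Real.exp_eq_exp_ℝ, NormedSpace.exp_eq_tsum_div]
    have h1 : ∀ i j : Fin d, x i * (Real.exp (-c * (ε i - ε j) ^ 2) * x j)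
        = ∑' n : ℕ, v i * v j * ((2 * c * (ε i * ε j)) ^ n / ((Nat.factorial n : ℕ) : ℝ)) := by
      intro i j
      have h2 : (∑' n : ℕ, v i * v j * ((2 * c * (ε i * ε j)) ^ n / ((Nat.factorial n : ℕ) : ℝ)))
          = v i * v j * Real.exp (2 * c * (ε i * ε j)) := by
        rw [tsum_mul_left, ← hexp]
      rw [h2, hv]
      have h3 : Real.exp (-c * (ε i - ε j) ^ 2)
          = Real.exp (-c * ε i ^ 2) * Real.exp (-c * ε j ^ 2)
            * Real.exp (2 * c * (ε i * ε j)) := by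
        rw [← Real.exp_add, ← Real.exp_add]; ring_nf
      rw [h3]
      ring
    have hqf : ∑ i, x i * ∑ j, Real.exp (-c * (ε i - ε j) ^ 2) * x j = ∑' n, f n := by
      calc ∑ i, x i * ∑ j, Real.exp (-c * (ε i - ε j) ^ 2) * x j
          = ∑ i, ∑ j, ∑' n : ℕ,
              v i * v j * ((2 * c * (ε i * ε j)) ^ n / ((Nat.factorial n : ℕ) : ℝ)) := by
            refine Finset.sum_congr rfl fun i _ => ?_
            rw [Finset.mul_sum]
            exact Finset.sum_congr rfl fun j _ => h1 i j
        _ = ∑' n : ℕ, ∑ i : Fin d, ∑ j : Fin d,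
              v i * v j * ((2 * c * (ε i * ε j)) ^ n / ((Nat.factorial n : ℕ) : ℝ)) := by
            rw [Summable.tsum_finsetSum fun i _ => summable_sum fun j _ => hsummand i j]
            exact Finset.sum_congr rfl fun i _ => (Summable.tsum_finsetSum fun j _ => hsummand i j).symm
        _ = ∑' n, f n := tsum_congr fun n => (key n).symm
    rw [hqf]
    have hvne : v ≠ 0 := by
      intro h
      apply hx
      ext i
      have h0 := congrFun h i
      simp only [hv, Pi.zero_apply] at h0
      exact (mul_eq_zero.1 h0).resolve_right (Real.exp_ne_zero _)
    have hex : ∃ n, s n ≠ 0 := by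
      by_contra h
      push_neg at h
      apply hvne
      have hdet : (Matrix.vandermonde ε).det ≠ 0 :=
        Matrix.det_vandermonde_ne_zero_iff.2 hε
      have hinj : Function.Injective (Matrix.vandermonde ε).vecMul := by
        rw [Matrix.vecMul_injective_iff_isUnit, Matrix.isUnit_iff_isUnit_det,
          isUnit_iff_ne_zero]
        exact hdet
      have h4 : Matrix.vecMul v (Matrix.vandermonde ε)
          = Matrix.vecMul 0 (Matrix.vandermonde ε) := by
        rw [Matrix.zero_vecMul]
        ext j
        have h5 := h (j : ℕ)
        simp only [hs] at h5
        simp only [Matrix.vecMul, dotProduct, Matrix.vandermonde, Matrix.of_apply,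
          Pi.zero_apply]
        rw [← h5]
      exact hinj h4
    obtain ⟨n, hn⟩ := hex
    have hfpos : 0 < f n := by
      rw [hf]
      have h1 : (0:ℝ) < (2 * c) ^ n / ((Nat.factorial n : ℕ) : ℝ) := by positivity
      have h2 : (0:ℝ) < (s n) ^ 2 := by positivity
      exact mul_pos h1 h2
    refine Summable.tsum_pos hsum (fun m => ?_) n hfpos
    rw [hf]
    positivity
end

section
/- Let a, x : ℂ with Complex.sin (a/2) ≠ 0 (equivalently, a is not an integer multiple of 2π, so that a + 2πk ≠ 0 for every integer k). Then the symmetric partial products of the bilateral infinite product converge: Tendsto (fun K : ℕ => ∏_{k ∈ Finset.Icc (−(K:ℤ)) (K:ℤ)} (1 − x / (a + 2·π·k))) atTop (nhds (Complex.sin ((a − x)/2) / Complex.sin (a/2))). -/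
open Filter

theorem bilateral_product_sin (a x : ℂ) (ha : Complex.sin (a / 2) ≠ 0) :
    Tendsto
      (fun K : ℕ => ∏ k ∈ Finset.Icc (-(K : ℤ)) (K : ℤ),
        (1 - x / (a + 2 * (Real.pi : ℂ) * (k : ℂ))))
      atTop (nhds (Complex.sin ((a - x) / 2) / Complex.sin (a / 2))) := by
  have hpi : (Real.pi : ℂ) ≠ 0 := by exact_mod_cast Real.pi_ne_zero
  obtain ⟨α, ha2⟩ : ∃ α : ℂ, a = 2 * (Real.pi : ℂ) * α :=
    ⟨a / (2 * (Real.pi : ℂ)), by field_simp⟩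
  obtain ⟨β, hb2⟩ : ∃ β : ℂ, a - x = 2 * (Real.pi : ℂ) * β :=
    ⟨(a - x) / (2 * (Real.pi : ℂ)), by field_simp⟩
  set p : ℂ := (Real.pi : ℂ) with hp
  have hx2 : x = 2 * p * α - 2 * p * β := by linear_combination ha2 - hb2
  -- α is not an integer
  have hint : ∀ k : ℤ, α ≠ (k : ℂ) := by
    intro k hk
    apply ha
    rw [Complex.sin_eq_zero_iff]
    exact ⟨k, by rw [ha2, hk]; ring⟩
  have hαk : ∀ k : ℤ, α + (k : ℂ) ≠ 0 := by
    intro k h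
    apply hint (-k)
    push_cast
    linear_combination h
  -- rewrite each factor
  have hfact : ∀ k : ℤ, (1 - x / (a + 2 * p * (k : ℂ))) = (β + k) / (α + k) := by
    intro k
    have h1 : a + 2 * p * (k : ℂ) = 2 * p * (α + k) := by rw [ha2]; ring
    have h2 : 2 * p * (α + k) ≠ 0 :=
      mul_ne_zero (mul_ne_zero two_ne_zero hpi) (hαk k)
    have e : x / (2 * p * (α + k)) = (α - β) / (α + k) := by
      rw [div_eq_div_iff h2 (hαk k)]
      linear_combination ((α : ℂ) + k) * hx2
    rw [h1, e, eq_div_iff (hαk k), sub_mul, one_mul, div_mul_cancel₀ _ (hαk k)]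
    ring
  -- partial products
  set A : ℕ → ℂ := fun K => p * β * ∏ j ∈ Finset.range K, ((1 : ℂ) - β ^ 2 / ((j : ℂ) + 1) ^ 2)
    with hA
  set B : ℕ → ℂ := fun K => p * α * ∏ j ∈ Finset.range K, ((1 : ℂ) - α ^ 2 / ((j : ℂ) + 1) ^ 2)
    with hB
  have hBfac : ∀ j : ℕ, ((1 : ℂ) - α ^ 2 / ((j : ℂ) + 1) ^ 2) ≠ 0 := by
    intro j h
    have hj : ((j : ℂ) + 1) ≠ 0 := by
      have := Nat.cast_add_one_ne_zero (R := ℂ) j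
      exact_mod_cast this
    have h2 : α ^ 2 / ((j : ℂ) + 1) ^ 2 = 1 := by linear_combination -h
    rw [div_eq_one_iff_eq (pow_ne_zero 2 hj)] at h2
    have hfac : (α - ((j : ℂ) + 1)) * (α + ((j : ℂ) + 1)) = 0 := by linear_combination h2
    rcases mul_eq_zero.mp hfac with h1 | h1
    · exact hint (j + 1) (by push_cast; linear_combination h1)
    · have := hαk ((j : ℤ) + 1)
      push_cast at this
      exact this h1
  have hα0 : α ≠ 0 := by
    have := hint 0; simpa using this
  have hBne : ∀ K, B K ≠ 0 := by
    intro K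
    apply mul_ne_zero (mul_ne_zero hpi hα0)
    exact Finset.prod_ne_zero_iff.mpr fun j _ => hBfac j
  -- key identity
  have hkey : ∀ K : ℕ, (∏ k ∈ Finset.Icc (-(K : ℤ)) (K : ℤ), ((β + k) / (α + k))) * B K = A K := by
    intro K
    induction K with
    | zero =>
      simp only [Nat.cast_zero, neg_zero, Finset.Icc_self, Finset.prod_singleton,
        Int.cast_zero, add_zero, hA, hB, Finset.range_zero, Finset.prod_empty, mul_one]
      field_simp
    | succ n ih =>
      have hicc : Finset.Icc (-((n : ℤ) + 1)) ((n : ℤ) + 1) =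
          insert (-((n : ℤ) + 1)) (insert ((n : ℤ) + 1) (Finset.Icc (-(n : ℤ)) (n : ℤ))) := by
        ext k; simp [Finset.mem_Icc]; omega
      have h1 : -((n : ℤ) + 1) ∉ insert ((n : ℤ) + 1) (Finset.Icc (-(n : ℤ)) (n : ℤ)) := by
        simp [Finset.mem_Icc]; omega
      have h2 : ((n : ℤ) + 1) ∉ Finset.Icc (-(n : ℤ)) (n : ℤ) := by
        simp [Finset.mem_Icc]
      have hBsucc : B (n + 1) = B n * ((1 : ℂ) - α ^ 2 / ((n : ℂ) + 1) ^ 2) := by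
        simp only [hB, Finset.prod_range_succ]; ring
      have hAsucc : A (n + 1) = A n * ((1 : ℂ) - β ^ 2 / ((n : ℂ) + 1) ^ 2) := by
        simp only [hA, Finset.prod_range_succ]; ring
      push_cast
      rw [hicc, Finset.prod_insert h1, Finset.prod_insert h2, hBsucc, hAsucc]
      push_cast at ih ⊢
      have hm : ((n : ℂ) + 1) ≠ 0 := by
        have := Nat.cast_add_one_ne_zero (R := ℂ) n
        exact_mod_cast this
      have hplus : α + ((n : ℂ) + 1) ≠ 0 := by
        have := hαk ((n : ℤ) + 1); push_cast at this; exact this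
      have hminus : α + -((n : ℂ) + 1) ≠ 0 := by
        have := hαk (-((n : ℤ) + 1)); push_cast at this; exact this
      have hpair : (β + -((n : ℂ) + 1)) / (α + -((n : ℂ) + 1)) *
          ((β + ((n : ℂ) + 1)) / (α + ((n : ℂ) + 1))) *
          ((1 : ℂ) - α ^ 2 / ((n : ℂ) + 1) ^ 2) = (1 : ℂ) - β ^ 2 / ((n : ℂ) + 1) ^ 2 := by
        have hm2 : ((n : ℂ) + 1) ^ 2 ≠ 0 := pow_ne_zero 2 hm
        have hd : (α + -((n : ℂ) + 1)) * (α + ((n : ℂ) + 1)) * ((n : ℂ) + 1) ^ 2 ≠ 0 :=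
          mul_ne_zero (mul_ne_zero hminus hplus) hm2
        have e2 : (1 : ℂ) - α ^ 2 / ((n : ℂ) + 1) ^ 2 =
            (((n : ℂ) + 1) ^ 2 - α ^ 2) / ((n : ℂ) + 1) ^ 2 := by
          rw [sub_div, div_self hm2]
        have e3 : (1 : ℂ) - β ^ 2 / ((n : ℂ) + 1) ^ 2 =
            (((n : ℂ) + 1) ^ 2 - β ^ 2) / ((n : ℂ) + 1) ^ 2 := by
          rw [sub_div, div_self hm2]
        rw [e2, e3, div_mul_div_comm, div_mul_div_comm, div_eq_div_iff hd hm2]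
        ring
      calc (β + -((n : ℂ) + 1)) / (α + -((n : ℂ) + 1)) *
            ((β + ((n : ℂ) + 1)) / (α + ((n : ℂ) + 1)) *
              ∏ k ∈ Finset.Icc (-(n : ℤ)) (n : ℤ), (β + (k : ℂ)) / (α + (k : ℂ))) *
            (B n * ((1 : ℂ) - α ^ 2 / ((n : ℂ) + 1) ^ 2))
          = ((∏ k ∈ Finset.Icc (-(n : ℤ)) (n : ℤ), (β + (k : ℂ)) / (α + (k : ℂ))) * B n) *
              ((β + -((n : ℂ) + 1)) / (α + -((n : ℂ) + 1)) *
                ((β + ((n : ℂ) + 1)) / (α + ((n : ℂ) + 1))) *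
                ((1 : ℂ) - α ^ 2 / ((n : ℂ) + 1) ^ 2)) := by ring
        _ = A n * ((1 : ℂ) - β ^ 2 / ((n : ℂ) + 1) ^ 2) := by rw [ih, hpair]
  -- conclude
  have hT : Tendsto (fun K : ℕ => A K / B K) atTop
      (nhds (Complex.sin ((a - x) / 2) / Complex.sin (a / 2))) := by
    have e1 : (a - x) / 2 = p * β := by linear_combination hb2 / 2
    have e2 : a / 2 = p * α := by linear_combination ha2 / 2
    rw [e1, e2]
    exact (Complex.tendsto_euler_sin_prod β).div (Complex.tendsto_euler_sin_prod α)
      (e2 ▸ ha)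
  apply hT.congr
  intro K
  rw [show (∏ k ∈ Finset.Icc (-(K : ℤ)) (K : ℤ), (1 - x / (a + 2 * p * (k : ℂ)))) =
      ∏ k ∈ Finset.Icc (-(K : ℤ)) (K : ℤ), ((β + k) / (α + k)) from
    Finset.prod_congr rfl fun k _ => hfact k, eq_comm, eq_div_iff (hBne K)]
  exact hkey K
end

section
/- Let σ1 = !![0,1;1,0], σ2 = !![0,−Complex.I; Complex.I,0], σ3 = !![1,0;0,−1] be the Pauli matrices in Matrix (Fin 2) (Fin 2) ℂ, and for v : Fin m → Fin 3 let Π v denote the ordered product σ_{v 0} * σ_{v 1} * ⋯ * σ_{v (m−1)} (with indices v i ∈ {0,1,2} labelling σ1, σ2, σ3). Then for every natural number m, 4 · card {v : Fin m → Fin 3 | ∃ c : ℂ, Π v = c • (1 : Matrix (Fin 2) (Fin 2) ℂ)} = 3^m + 3·(−1)^m (as integers). -/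
/-- The three non-identity Pauli matrices. -/
noncomputable def pauliNI : Fin 3 → Matrix (Fin 2) (Fin 2) ℂ :=
  ![!![0, 1; 1, 0], !![0, -Complex.I; Complex.I, 0], !![1, 0; 0, -1]]

def pf : Fin 3 → ZMod 2 × ZMod 2 := ![(1,0),(1,1),(0,1)]

noncomputable def PP : ZMod 2 × ZMod 2 → Matrix (Fin 2) (Fin 2) ℂ :=
  fun s => if s = (0,0) then 1 else if s = (1,0) then !![0,1;1,0]
    else if s = (0,1) then !![1,0;0,-1] else !![0,-Complex.I;Complex.I,0]

lemma step (x : Fin 3) (s : ZMod 2 × ZMod 2) :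
    ∃ c : ℂ, c ≠ 0 ∧ pauliNI x * PP s = c • PP (pf x + s) := by
  obtain ⟨a, b⟩ := s
  fin_cases x <;> fin_cases a <;> fin_cases b <;>
    simp +decide [pauliNI, pf, PP, Matrix.one_fin_two, Prod.ext_iff,
      show (1:ZMod 2)+1 = 0 from by decide] <;>
    first
    | (refine ⟨1, one_ne_zero, ?_⟩; norm_num [Matrix.mul_fin_two]; done)
    | (refine ⟨Complex.I, Complex.I_ne_zero, ?_⟩;
        norm_num [Matrix.mul_fin_two, Complex.I_mul_I]; done)
    | (refine ⟨-Complex.I, by simp [Complex.I_ne_zero], ?_⟩;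
        norm_num [Matrix.mul_fin_two, Complex.I_mul_I]; done)

lemma prod_eq {m : ℕ} (v : Fin m → Fin 3) :
    ∃ c : ℂ, c ≠ 0 ∧ (List.ofFn fun i => pauliNI (v i)).prod
      = c • PP (∑ i, pf (v i)) := by
  induction m with
  | zero => exact ⟨1, one_ne_zero, by simp +decide [PP]⟩
  | succ n ih =>
    obtain ⟨c, hc, hprod⟩ := ih (v ∘ Fin.succ)
    obtain ⟨d, hd, hstep⟩ := step (v 0) (∑ i, pf (v (Fin.succ i)))
    refine ⟨c * d, mul_ne_zero hc hd, ?_⟩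
    rw [List.ofFn_succ, List.prod_cons, Fin.sum_univ_succ]
    simp only [Function.comp] at hprod
    rw [hprod, mul_smul_comm, hstep, smul_smul]

lemma mem_iff {m : ℕ} (v : Fin m → Fin 3) :
    (∃ c : ℂ, (List.ofFn fun i => pauliNI (v i)).prod
      = c • (1 : Matrix (Fin 2) (Fin 2) ℂ)) ↔ (∑ i, pf (v i)) = 0 := by
  obtain ⟨c, hc, hprod⟩ := prod_eq v
  constructor
  · rintro ⟨c', h'⟩
    by_contra hs
    rw [hprod] at h'
    set s := ∑ i, pf (v i) with hsdef
    have key : ∀ i j : Fin 2, c * PP s i j = c' * (1 : Matrix (Fin 2) (Fin 2) ℂ) i j := by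
      intro i j
      have := congrFun (congrFun h' i) j
      simpa [Matrix.smul_apply] using this
    obtain ⟨a, b⟩ := s
    fin_cases a <;> fin_cases b <;> simp only [Fin.zero_eta, Fin.mk_one] at *
    · exact hs (by rfl)
    · -- s = (0,1) : Z
      have h1 := key 0 0
      have h2 := key 1 1
      simp +decide [PP, Matrix.one_apply, Prod.ext_iff] at h1 h2
      apply hc
      have h3 : c' = 0 := by linear_combination (-1/2 : ℂ) * h1 + (-1/2 : ℂ) * h2
      rw [h3] at h1; exact h1
    · -- s = (1,0) : X
      have h1 := key 0 0
      have h2 := key 0 1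
      simp +decide [PP, Matrix.one_apply, Prod.ext_iff] at h1 h2
      exact hc h2
    · -- s = (1,1) : Y
      have h1 := key 0 0
      have h2 := key 0 1
      simp +decide [PP, Matrix.one_apply, Prod.ext_iff, Complex.I_ne_zero] at h1 h2
      exact hc h2
  · intro hs
    rw [hs] at hprod
    exact ⟨c, by simpa +decide [PP] using hprod⟩

def N (m : ℕ) (s : ZMod 2 × ZMod 2) : ℕ :=
  (Finset.univ.filter fun v : Fin m → Fin 3 => ∑ i, pf (v i) = s).card

lemma total (m : ℕ) : ∑ s : ZMod 2 × ZMod 2, N m s = 3 ^ m := by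
  have := Finset.card_eq_sum_card_fiberwise
    (f := fun v : Fin m → Fin 3 => ∑ i, pf (v i)) (s := Finset.univ) (t := Finset.univ)
    (fun x _ => Finset.mem_univ _)
  simp only [N]
  rw [← this]
  simp [Finset.card_univ]

lemma total4 (m : ℕ) :
    N m (0,0) + N m (0,1) + N m (1,0) + N m (1,1) = 3 ^ m := by
  rw [← total m, Fintype.sum_prod_type]
  rw [show (Finset.univ : Finset (ZMod 2)) = {0, 1} from by decide]
  simp [Finset.sum_insert, Finset.sum_pair]
  ring

lemma hQ : ∀ (x : Fin 3) (s : ZMod 2 × ZMod 2), (pf x + s = 0) ↔ s = pf x := by decide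

lemma rec_step (m : ℕ) : N (m+1) 0 = ∑ x : Fin 3, N m (pf x) := by
  classical
  have key : N (m+1) 0 = ((Finset.univ : Finset (Fin 3 × (Fin m → Fin 3))).filter
      fun p => ∑ i, pf (p.2 i) = pf p.1).card := by
    refine Finset.card_bij' (fun v _ => (v 0, v ∘ Fin.succ))
      (fun p _ => Fin.cons p.1 p.2) ?_ ?_ ?_ ?_
    · intro v hv
      simp only [Finset.mem_filter, Finset.mem_univ, true_and] at hv ⊢
      rw [Fin.sum_univ_succ] at hv
      exact (hQ _ _).mp hv
    · intro p hp
      simp only [Finset.mem_filter, Finset.mem_univ, true_and] at hp ⊢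
      rw [Fin.sum_univ_succ]
      simp only [Fin.cons_zero, Fin.cons_succ]
      exact (hQ _ _).mpr hp
    · intro v _
      exact Fin.cons_self_tail v
    · intro p _
      ext <;> simp [Fin.cons_zero, Fin.cons_succ]
  rw [key, Finset.card_filter, Fintype.sum_prod_type]
  congr 1
  ext x
  rw [N, Finset.card_filter]

theorem count_formula (m : ℕ) : (4 : ℤ) * N m 0 = 3 ^ m + 3 * (-1) ^ m := by
  induction m with
  | zero =>
    have : N 0 0 = 1 := by decide
    rw [this]; norm_num
  | succ n ih =>
    have h1 : N (n+1) 0 = N n (pf 0) + N n (pf 1) + N n (pf 2) := by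
      rw [rec_step, Fin.sum_univ_three]
    have h2 := total4 n
    have h3 : (N (n+1) 0 : ℤ) = 3 ^ n - N n 0 := by
      have h4 : (N n (0,0) : ℤ) + N n (0,1) + N n (1,0) + N n (1,1) = 3 ^ n := by
        exact_mod_cast congrArg (Nat.cast : ℕ → ℤ) h2
      have h5 : N n 0 = N n (0,0) := rfl
      have : (N (n+1) 0 : ℤ) = (N n (pf 0) : ℤ) + N n (pf 1) + N n (pf 2) := by
        exact_mod_cast congrArg (Nat.cast : ℕ → ℤ) h1
      rw [this, h5]
      have e0 : pf 0 = (1,0) := rfl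
      have e1 : pf 1 = (1,1) := rfl
      have e2 : pf 2 = (0,1) := rfl
      rw [e0, e1, e2]
      linarith
    rw [h3]
    ring_nf
    ring_nf at ih
    linarith

theorem count_pauli_words_proportional_to_id (m : ℕ) :
    (4 : ℤ) *
        ({v : Fin m → Fin 3 |
            ∃ c : ℂ, (List.ofFn fun i => pauliNI (v i)).prod
              = c • (1 : Matrix (Fin 2) (Fin 2) ℂ)}.ncard : ℤ)
      = 3 ^ m + 3 * (-1) ^ m := by
  classical
  have hset : {v : Fin m → Fin 3 |
      ∃ c : ℂ, (List.ofFn fun i => pauliNI (v i)).prod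
        = c • (1 : Matrix (Fin 2) (Fin 2) ℂ)}
      = ↑(Finset.univ.filter fun v : Fin m → Fin 3 => ∑ i, pf (v i) = 0) := by
    ext v
    simp only [Set.mem_setOf_eq, Finset.coe_filter, Finset.mem_univ, true_and]
    exact mem_iff v
  rw [hset, Set.ncard_coe_finset]
  exact count_formula m
end

section
/- Let d, d', Ω ≥ 1 be natural numbers, let T : EuclideanSpace ℂ (Fin d) →ₗ[ℂ] EuclideanSpace ℂ (Fin d') be a surjective linear map, and let μ be a probability measure on Fin Ω → EuclideanSpace ℂ (Fin d) absolutely continuous with respect to the Lebesgue (volume) measure. Then for μ-almost every tuple v, the rank of the Ω × Ω Gram matrix G with entries G i j = ⟪T (v i), T (v j)⟫ equals min Ω d'. -/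
open MeasureTheory Module Submodule Set Matrix

namespace ProjGram

variable {d d' : ℕ} (T : EuclideanSpace ℂ (Fin d) →ₗ[ℂ] EuclideanSpace ℂ (Fin d'))

/-- Tuples whose image under `T` contains `min n d'` independent vectors. -/
def goodSet (n : ℕ) : Set (Fin n → EuclideanSpace ℂ (Fin d)) :=
  {v | ∃ f : Fin (min n d') → Fin n, LinearIndependent ℂ fun j => T (v (f j))}

lemma isOpen_goodSet (n : ℕ) : IsOpen (goodSet T n) := by
  have : goodSet T n = ⋃ f : Fin (min n d') → Fin n,
      {v | LinearIndependent ℂ fun j => T (v (f j))} := by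
    ext v; simp [goodSet]
  rw [this]
  refine isOpen_iUnion fun f => ?_
  have hc : Continuous fun (v : Fin n → EuclideanSpace ℂ (Fin d)) =>
      (fun j => T (v (f j)) : Fin (min n d') → EuclideanSpace ℂ (Fin d')) :=
    continuous_pi fun j => T.continuous_of_finiteDimensional.comp (continuous_apply (f j))
  exact isOpen_setOf_linearIndependent.preimage hc

lemma finrank_span_of_mem_goodSet {n : ℕ} {v : Fin n → EuclideanSpace ℂ (Fin d)}
    (hv : v ∈ goodSet T n) :
    finrank ℂ (span ℂ (Set.range fun i => T (v i))) = min n d' := by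
  obtain ⟨f, hf⟩ := hv
  refine le_antisymm (le_min ?_ ?_) ?_
  · simpa [Set.finrank] using finrank_range_le_card (R := ℂ) fun i => T (v i)
  · simpa [finrank_euclideanSpace_fin] using
      Submodule.finrank_le (span ℂ (Set.range fun i => T (v i)))
  · have h1 : finrank ℂ (span ℂ (Set.range fun j => T (v (f j)))) = min n d' := by
      simpa using finrank_span_eq_card hf
    rw [← h1]
    apply Submodule.finrank_mono
    apply span_mono
    exact Set.range_comp_subset_range f fun i => T (v i)

lemma gram_rank_eq {m : ℕ} (u : Fin m → EuclideanSpace ℂ (Fin d')) :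
    (Matrix.of fun i j : Fin m => (inner ℂ (u i) (u j) : ℂ)).rank
      = finrank ℂ (span ℂ (Set.range u)) := by
  classical
  set A : Matrix (Fin d') (Fin m) ℂ := Matrix.of fun k i => u i k with hA
  have hG : (Matrix.of fun i j : Fin m => (inner ℂ (u i) (u j) : ℂ)) = Aᴴ * A := by
    ext i j
    simp [Matrix.mul_apply, hA, Matrix.conjTranspose_apply, PiLp.inner_apply,
      RCLike.inner_apply, mul_comm]
  open ComplexOrder in
  rw [hG, Matrix.rank_conjTranspose_mul_self, Matrix.rank_eq_finrank_span_cols]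
  have hAT : Set.range A.col =
      ⇑(WithLp.linearEquiv 2 ℂ (Fin d' → ℂ)).toLinearMap '' Set.range u := by
    rw [← Set.range_comp]; rfl
  rw [hAT, ← Submodule.map_span]
  exact LinearEquiv.finrank_map_eq _ _


lemma snoc_mem_goodSet_of_ge {n : ℕ} (hnd : d' ≤ n) {w : Fin n → EuclideanSpace ℂ (Fin d)}
    (hw : w ∈ goodSet T n) (x : EuclideanSpace ℂ (Fin d)) :
    Fin.snoc w x ∈ goodSet T (n + 1) := by
  obtain ⟨f, hf⟩ := hw
  have hm : min (n + 1) d' = min n d' := by omega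
  refine ⟨fun j => Fin.castSucc (f (Fin.cast hm j)), ?_⟩
  have : (fun j => T (Fin.snoc (α := fun _ => EuclideanSpace ℂ (Fin d)) w x (Fin.castSucc (f (Fin.cast hm j)))))
      = (fun j => T (w (f j))) ∘ (finCongr hm) := by
    funext j; simp [Fin.snoc_castSucc]
  rw [this]
  exact (linearIndependent_equiv (finCongr hm)).mpr hf

set_option maxHeartbeats 1000000 in
lemma snoc_mem_goodSet_of_lt {n : ℕ} (hnd : n < d') {w : Fin n → EuclideanSpace ℂ (Fin d)}
    {f : Fin (min n d') → Fin n} (hf : LinearIndependent ℂ fun j => T (w (f j)))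
    {x : EuclideanSpace ℂ (Fin d)}
    (hx : T x ∉ span ℂ (Set.range fun j => T (w (f j)))) :
    Fin.snoc w x ∈ goodSet T (n + 1) := by
  have hmn : min n d' = n := by omega
  have hm1 : min (n + 1) d' = n + 1 := by omega
  set base : Fin n → Fin (n + 1) := fun j' => Fin.castSucc (f (Fin.cast hmn.symm j')) with hbase
  refine ⟨fun j => Fin.snoc (α := fun _ => Fin (n+1)) base (Fin.last n) (Fin.cast hm1 j), ?_⟩
  have key : (fun i : Fin (n + 1) => T (Fin.snoc (α := fun _ => EuclideanSpace ℂ (Fin d)) w x (Fin.snoc (α := fun _ => Fin (n+1)) base (Fin.last n) i)))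
      = Fin.snoc (fun j' : Fin n => T (w (f (Fin.cast hmn.symm j')))) (T x) := by
    funext i
    refine Fin.lastCases ?_ (fun j' => ?_) i
    · simp [Fin.snoc_last]
    · simp [hbase, Fin.snoc_castSucc]
  have hind : LinearIndependent ℂ
      (fun i : Fin (n + 1) => T (Fin.snoc (α := fun _ => EuclideanSpace ℂ (Fin d)) w x (Fin.snoc (α := fun _ => Fin (n+1)) base (Fin.last n) i))) := by
    rw [key]
    refine linearIndependent_fin_snoc.mpr ⟨?_, ?_⟩
    · exact (linearIndependent_equiv (finCongr hmn.symm) (f := fun j => T (w (f j)))).mpr hf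
    · intro hmem
      apply hx
      have : Set.range (fun j' : Fin n => T (w (f (Fin.cast hmn.symm j'))))
          = Set.range (fun j => T (w (f j))) := by
        have : (fun j' : Fin n => T (w (f (Fin.cast hmn.symm j'))))
            = (fun j => T (w (f j))) ∘ (finCongr hmn.symm) := rfl
        rw [this, Set.range_comp, Equiv.range_eq_univ, Set.image_univ]
      rwa [this] at hmem
  exact (linearIndependent_equiv (finCongr hm1) (f := fun i : Fin (n + 1) => T (Fin.snoc (α := fun _ => EuclideanSpace ℂ (Fin d)) w x (Fin.snoc (α := fun _ => Fin (n+1)) base (Fin.last n) i)))).mpr hind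

lemma goodSet_compl_null (hT : Function.Surjective T) (n : ℕ) :
    (volume : Measure (Fin n → EuclideanSpace ℂ (Fin d))) ((goodSet T n)ᶜ) = 0 := by
  induction n with
  | zero =>
    have hempty : IsEmpty (Fin (min 0 d')) := by rw [Nat.zero_min]; infer_instance
    have : goodSet T 0 = Set.univ := by
      refine Set.eq_univ_of_forall fun v => ⟨fun j => hempty.elim j, ?_⟩
      exact linearIndependent_empty_type
    rw [this, Set.compl_univ, measure_empty]
  | succ n ih =>
    set E := EuclideanSpace ℂ (Fin d)
    set ψ : ((Fin n → E) × E) → (Fin (n + 1) → E) := fun p => Fin.snoc p.1 p.2 with hψdef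
    have hmp0 := ((measurePreserving_piFinSuccAbove
        (fun _ : Fin (n + 1) => (volume : Measure E)) (Fin.last n)).symm _).comp
        (Measure.measurePreserving_swap (μ := Measure.pi fun _ : Fin n => (volume : Measure E))
          (ν := (volume : Measure E)))
    have hψ : ⇑(MeasurableEquiv.piFinSuccAbove (fun _ : Fin (n + 1) => E) (Fin.last n)).symm
        ∘ Prod.swap = ψ := by
      funext p
      simp [MeasurableEquiv.piFinSuccAbove, Fin.insertNthEquiv, hψdef,
        Fin.insertNth_last']
    rw [hψ] at hmp0
    set P := (Measure.pi fun _ : Fin n => (volume : Measure E)).prod (volume : Measure E)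
    have hbadmeas : MeasurableSet ((goodSet T (n + 1))ᶜ) :=
      (isOpen_goodSet T (n + 1)).measurableSet.compl
    have key : (volume : Measure (Fin (n + 1) → E)) ((goodSet T (n + 1))ᶜ)
        = P (ψ ⁻¹' (goodSet T (n + 1))ᶜ) := by
      rw [volume_pi]
      exact (hmp0.measure_preimage hbadmeas.nullMeasurableSet).symm
    rw [key]
    set S₂ : Set ((Fin n → E) × E) :=
      (goodSet T n ×ˢ (Set.univ : Set E)) ∩ ψ ⁻¹' ((goodSet T (n + 1))ᶜ) with hS₂def
    have hsub : ψ ⁻¹' ((goodSet T (n + 1))ᶜ) ⊆ ((goodSet T n)ᶜ ×ˢ (Set.univ : Set E)) ∪ S₂ := by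
      intro p hp
      by_cases h : p.1 ∈ goodSet T n
      · exact Or.inr ⟨⟨h, trivial⟩, hp⟩
      · exact Or.inl ⟨h, trivial⟩
    refine le_antisymm ?_ (zero_le)
    refine le_trans (measure_mono hsub) ?_
    refine le_trans (measure_union_le _ _) ?_
    have h1 : P ((goodSet T n)ᶜ ×ˢ (Set.univ : Set E)) = 0 := by
      rw [Measure.prod_prod, ← volume_pi, ih, zero_mul]
    have h2 : P S₂ = 0 := by
      have hS₂meas : MeasurableSet S₂ :=
        (((isOpen_goodSet T n).measurableSet.prod MeasurableSet.univ)).inter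
          (hmp0.measurable hbadmeas)
      rw [Measure.measure_prod_null hS₂meas]
      refine Filter.Eventually.of_forall fun w => ?_
      by_cases hw : w ∈ goodSet T n
      · by_cases hnd : d' ≤ n
        · have : Prod.mk w ⁻¹' S₂ = ∅ := by
            ext x
            simp only [hS₂def, Set.mem_preimage, Set.mem_inter_iff, Set.mem_prod,
              Set.mem_compl_iff, Set.mem_empty_iff_false, iff_false, not_and]
            intro _
            simp only [hψdef]
            exact fun hc => hc (snoc_mem_goodSet_of_ge T hnd hw x)
          simp [this]
        · push_neg at hnd
          obtain ⟨f, hf⟩ := hw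
          set p := span ℂ (Set.range fun j => T (w (f j))) with hpdef
          have hmn : min n d' = n := by omega
          have hp : p ≠ ⊤ := by
            intro h
            have h2 : finrank ℂ p = n := by
              rw [hpdef]
              simpa [hmn] using finrank_span_eq_card hf
            rw [h, finrank_top, finrank_euclideanSpace_fin] at h2
            omega
          have hq : (Submodule.restrictScalars ℝ (p.comap T)) ≠ ⊤ := by
            rw [Ne, Submodule.restrictScalars_eq_top_iff]
            intro h
            apply hp
            rw [← Submodule.map_comap_eq_of_surjective hT p, h, Submodule.map_top,
              LinearMap.range_eq_top.mpr hT]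
          have hnull : (volume : Measure E) ↑(Submodule.restrictScalars ℝ (p.comap T)) = 0 :=
            Measure.addHaar_submodule _ _ hq
          have : (fun x => (volume : Measure E) (Prod.mk w ⁻¹' S₂)) w = (volume : Measure E) (Prod.mk w ⁻¹' S₂) := rfl
          show (volume : Measure E) (Prod.mk w ⁻¹' S₂) = 0
          refine measure_mono_null ?_ hnull
          intro x hx
          simp only [hS₂def, Set.mem_preimage, Set.mem_inter_iff, Set.mem_compl_iff] at hx
          show T x ∈ p
          by_contra hxp
          exact hx.2 (snoc_mem_goodSet_of_lt T hnd hf hxp)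
      · have : Prod.mk w ⁻¹' S₂ = ∅ := by
          ext x
          simp only [hS₂def, Set.mem_preimage, Set.mem_inter_iff, Set.mem_prod,
            Set.mem_empty_iff_false, iff_false, not_and]
          exact fun h => absurd h.1 hw
        simp [this]
    rw [h1, h2] at *
    simp [h1, h2]

end ProjGram

theorem projected_gram_rank_ae_min (d d' Ω : ℕ) (hd : 1 ≤ d) (hd' : 1 ≤ d') (hΩ : 1 ≤ Ω)
    (T : EuclideanSpace ℂ (Fin d) →ₗ[ℂ] EuclideanSpace ℂ (Fin d'))
    (hT : Function.Surjective T)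
    (μ : Measure (Fin Ω → EuclideanSpace ℂ (Fin d))) [IsProbabilityMeasure μ]
    (hμ : μ ≪ (volume : Measure (Fin Ω → EuclideanSpace ℂ (Fin d)))) :
    ∀ᵐ v ∂μ,
      (Matrix.of fun i j : Fin Ω => (inner ℂ (T (v i)) (T (v j)) : ℂ)).rank = min Ω d' := by
  have h0 : μ ((ProjGram.goodSet T Ω)ᶜ) = 0 := hμ (ProjGram.goodSet_compl_null T hT Ω)
  have h1 : ∀ᵐ v ∂μ, v ∈ ProjGram.goodSet T Ω := by
    rw [ae_iff]
    exact h0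
  filter_upwards [h1] with v hv
  exact (ProjGram.gram_rank_eq (fun i => T (v i))).trans
    (ProjGram.finrank_span_of_mem_goodSet T hv)
end

section
/- Let n ≥ 1 and d ≥ 1 be natural numbers, ε : Fin d → ℝ, and v > 0 a real number. Let μ be the product measure on Fin n → ℝ whose factors are each the Gaussian measure on ℝ with mean 0 and variance v. Then ∫ (t : Fin n → ℝ), ∏_{k : Fin n} ((1/d) · Σ_{i : Fin d} Complex.exp (Complex.I · (t k − t (k + 1)) · (ε i))) ∂μ = (1 / d^n) · (Matrix.trace (K ^ n) : ℂ), where the index k + 1 is taken cyclically in Fin n, and K ∈ Matrix (Fin d) (Fin d) ℂ has real entries K i j = Real.exp (−(v/2) · (ε i − ε j)²). -/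
open MeasureTheory ProbabilityTheory
open scoped NNReal ENNReal

lemma gcm_gauss_char (v : ℝ) (hv : 0 < v) (c : ℝ) :
    ∫ x : ℝ, Complex.exp (Complex.I * x * c) ∂(gaussianReal 0 v.toNNReal)
      = Complex.exp (-(v/2) * c^2) := by
  have hvne : v.toNNReal ≠ 0 := by
    simp only [ne_eq, Real.toNNReal_eq_zero, not_le]; exact hv
  have hvv : ((v.toNNReal : ℝ)) = v := Real.coe_toNNReal v hv.le
  rw [gaussianReal_of_var_ne_zero 0 hvne]
  have hpdf : gaussianPDF 0 v.toNNReal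
      = fun x => (((gaussianPDFReal 0 v.toNNReal x).toNNReal : ℝ≥0) : ℝ≥0∞) := by
    funext x; rw [gaussianPDF_def]; rfl
  rw [hpdf, integral_withDensity_eq_integral_smul
    ((measurable_gaussianPDFReal 0 v.toNNReal).real_toNNReal) _]
  have hS : (0:ℝ) < 2 * Real.pi * v := by positivity
  have key : ∀ x : ℝ, (gaussianPDFReal 0 v.toNNReal x).toNNReal • Complex.exp (Complex.I * x * c)
      = ((Real.sqrt (2 * Real.pi * v))⁻¹ : ℂ) *
        Complex.exp ((-(1/(2*v)) : ℂ) * x ^ 2 + (Complex.I * c) * x + 0) := by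
    intro x
    rw [NNReal.smul_def, Real.coe_toNNReal _ (gaussianPDFReal_nonneg _ _ _),
      Complex.real_smul, gaussianPDFReal_def]
    simp only [hvv, sub_zero]
    push_cast
    rw [mul_assoc, ← Complex.exp_add]
    congr 2
    have : (v:ℂ) ≠ 0 := by exact_mod_cast hv.ne'
    field_simp
    ring
  simp_rw [key]
  rw [integral_const_mul, integral_cexp_quadratic (by
    simp only [Complex.neg_re, Complex.ofReal_re]
    norm_num
    positivity
    : ((-(1/(2*v)) : ℂ)).re < 0)]
  have h1 : ((Real.pi : ℂ)) / -(-(1/(2*v)) : ℂ) = ((2 * Real.pi * v : ℝ) : ℂ) := by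
    have : (v:ℂ) ≠ 0 := by exact_mod_cast hv.ne'
    push_cast
    field_simp
  rw [h1]
  have h2 : ((2 * Real.pi * v : ℝ) : ℂ) ^ (1/2 : ℂ) = ((Real.sqrt (2 * Real.pi * v) : ℝ) : ℂ) := by
    rw [Real.sqrt_eq_rpow, Complex.ofReal_cpow hS.le]
    norm_num
  rw [h2]
  have h3 : (0 : ℂ) - (Complex.I * c)^2 / (4 * (-(1/(2*v)) : ℂ)) = -(v/2) * c^2 := by
    have hvc : (v:ℂ) ≠ 0 := by exact_mod_cast hv.ne'
    field_simp
    ring_nf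
    rw [Complex.I_sq]
    ring
  rw [h3, ← mul_assoc]
  have h4 : ((Real.sqrt (2 * Real.pi * v))⁻¹ : ℂ) * ((Real.sqrt (2 * Real.pi * v) : ℝ) : ℂ) = 1 := by
    rw [inv_mul_cancel₀]
    exact_mod_cast (Real.sqrt_ne_zero').mpr hS
  rw [h4, one_mul]

lemma gcm_pi_fubini {n : ℕ} (μ : Measure ℝ) [SigmaFinite μ] (f : Fin n → ℝ → ℂ) :
    ∫ x : Fin n → ℝ, ∏ k, f k (x k) ∂(Measure.pi fun _ => μ) = ∏ k, ∫ x, f k x ∂μ := by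
  letI : MeasureSpace ℝ := ⟨μ⟩
  haveI : SigmaFinite (volume : Measure ℝ) := ‹_›
  rw [show (Measure.pi fun _ : Fin n => μ) = (volume : Measure (Fin n → ℝ)) from
    (volume_pi).symm]
  exact MeasureTheory.integral_fintype_prod_eq_prod f

lemma gcm_entry_pow {d : ℕ} (A : Matrix (Fin d) (Fin d) ℂ) (m : ℕ) (i j : Fin d) :
    (A ^ (m+1)) i j
      = ∑ g : Fin m → Fin d, ∏ k : Fin (m+1),
          A ((Fin.cons i (Fin.snoc g j) : Fin (m+2) → Fin d) k.castSucc)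
            ((Fin.cons i (Fin.snoc g j) : Fin (m+2) → Fin d) k.succ) := by
  induction m generalizing i j with
  | zero =>
    rw [pow_one, Fintype.sum_unique]
    simp [Fin.prod_univ_one]
    rfl
  | succ m ih =>
    rw [pow_succ', Matrix.mul_apply]
    simp_rw [ih]
    rw [← Equiv.sum_comp (Fin.consEquiv (fun _ : Fin (m+1) => Fin d)), Fintype.sum_prod_type]
    simp_rw [Finset.mul_sum]
    congr 1; funext x
    congr 1; funext g
    show A i x * _ = ∏ k : Fin (m+2),
        A ((Fin.cons i (Fin.snoc (Fin.cons x g) j) : Fin (m+3) → Fin d) k.castSucc)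
          ((Fin.cons i (Fin.snoc (Fin.cons x g) j) : Fin (m+3) → Fin d) k.succ)
    simp only [← Fin.cons_snoc_eq_snoc_cons, Fin.prod_univ_succ, Fin.castSucc_zero,
      Fin.cons_zero, ← Fin.succ_castSucc, Fin.cons_succ]

lemma gcm_trace_pow {d : ℕ} (A : Matrix (Fin d) (Fin d) ℂ) (m : ℕ) :
    Matrix.trace (A ^ (m+1))
      = ∑ g : Fin (m+1) → Fin d, ∏ k : Fin (m+1), A (g k) (g (finRotate (m+1) k)) := by
  rw [Matrix.trace]
  simp_rw [Matrix.diag, gcm_entry_pow]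
  rw [← Equiv.sum_comp (Fin.consEquiv (fun _ : Fin (m+1) => Fin d)) (g := fun g =>
    ∏ k : Fin (m+1), A (g k) (g (finRotate (m+1) k))), Fintype.sum_prod_type]
  congr 1; funext i
  congr 1; funext g
  show (∏ k : Fin (m+1), A ((Fin.cons i (Fin.snoc g i) : Fin (m+2) → Fin d) k.castSucc)
      ((Fin.cons i (Fin.snoc g i) : Fin (m+2) → Fin d) k.succ))
    = ∏ k : Fin (m+1), A ((Fin.cons i g : Fin (m+1) → Fin d) k)
        ((Fin.cons i g : Fin (m+1) → Fin d) (finRotate (m+1) k))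
  have hnode : (Fin.cons i (Fin.snoc g i) : Fin (m+2) → Fin d)
      = Fin.snoc (Fin.cons i g) ((Fin.cons i g : Fin (m+1) → Fin d) 0) := by
    rw [Fin.cons_zero, Fin.cons_snoc_eq_snoc_cons]
  apply Finset.prod_congr rfl
  intro k _
  congr 1
  · rw [hnode, Fin.snoc_castSucc]
  · induction k using Fin.lastCases with
    | last => rw [hnode, Fin.succ_last, Fin.snoc_last, finRotate_last]
    | cast k =>
      rw [hnode, finRotate_succ_apply, Fin.coeSucc_eq_succ, Fin.succ_castSucc,
        Fin.snoc_castSucc]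

theorem gaussian_cyclic_moment_eq_trace_pow (n d : ℕ) (hn : 1 ≤ n) (hd : 1 ≤ d)
    (ε : Fin d → ℝ) (v : ℝ) (hv : 0 < v) :
    (∫ t : Fin n → ℝ,
        ∏ k : Fin n,
          ((1 / (d : ℂ)) * ∑ i : Fin d,
            Complex.exp (Complex.I * ((t k : ℂ) - (t (finRotate n k) : ℂ)) * (ε i : ℂ)))
        ∂(Measure.pi fun _ : Fin n => gaussianReal 0 v.toNNReal))
      = (1 / (d : ℂ) ^ n) *
          Matrix.trace
            ((Matrix.of fun i j : Fin d =>
                (Real.exp (-(v / 2) * (ε i - ε j) ^ 2) : ℂ)) ^ n) := by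
  obtain ⟨m, rfl⟩ : ∃ m, n = m + 1 := ⟨n - 1, by omega⟩
  set σ : Equiv.Perm (Fin (m+1)) := finRotate (m+1) with hσ
  set μ1 : Measure ℝ := gaussianReal 0 v.toNNReal with hμ1
  set c : (Fin (m+1) → Fin d) → Fin (m+1) → ℝ :=
    fun g k => ε (g k) - ε (g (σ.symm k)) with hc
  -- Step 1: pointwise rewriting of the integrand
  have hint : ∀ t : Fin (m+1) → ℝ,
      (∏ k : Fin (m+1), ((1 / (d : ℂ)) * ∑ i : Fin d,
          Complex.exp (Complex.I * ((t k : ℂ) - (t (finRotate (m+1) k) : ℂ)) * (ε i : ℂ))))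
        = (1/(d:ℂ))^(m+1) * ∑ g : Fin (m+1) → Fin d,
            ∏ k : Fin (m+1), Complex.exp (Complex.I * (t k : ℂ) * ((c g k : ℝ) : ℂ)) := by
    intro t
    rw [Finset.prod_mul_distrib, Finset.prod_const, Finset.card_univ, Fintype.card_fin]
    congr 1
    rw [Finset.prod_univ_sum (fun _ => Finset.univ), Fintype.piFinset_univ]
    apply Finset.sum_congr rfl
    intro g _
    rw [← Complex.exp_sum, ← Complex.exp_sum]
    congr 1
    have h2 : ∑ k : Fin (m+1), Complex.I * (t (σ k) : ℂ) * (ε (g k) : ℂ)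
        = ∑ k : Fin (m+1), Complex.I * (t k : ℂ) * (ε (g (σ.symm k)) : ℂ) := by
      rw [← Equiv.sum_comp σ
        (fun k => Complex.I * (t k : ℂ) * (ε (g (σ.symm k)) : ℂ))]
      simp only [Equiv.symm_apply_apply]
    have expand : ∀ k : Fin (m+1),
        Complex.I * ((t k : ℂ) - (t (finRotate (m+1) k) : ℂ)) * (ε (g k) : ℂ)
          = Complex.I * (t k : ℂ) * (ε (g k) : ℂ)
            - Complex.I * (t (σ k) : ℂ) * (ε (g k) : ℂ) := by
      intro k; rw [hσ]; ring
    simp_rw [expand]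
    rw [Finset.sum_sub_distrib, h2, ← Finset.sum_sub_distrib]
    apply Finset.sum_congr rfl
    intro k _
    rw [hc]
    push_cast
    ring
  rw [← hσ] at hint
  simp_rw [hint]
  rw [integral_const_mul, integral_finset_sum]
  swap
  · intro g _
    apply Integrable.mono' (integrable_const (1:ℝ))
    · apply Continuous.aestronglyMeasurable
      fun_prop
    · filter_upwards with t
      rw [norm_prod]
      apply le_of_eq
      rw [Finset.prod_eq_one]
      intro k _
      rw [Complex.norm_exp]
      simp [Complex.mul_re]
  have hstep : ∀ g : Fin (m+1) → Fin d,
      ∫ t : Fin (m+1) → ℝ,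
          (∏ k : Fin (m+1), Complex.exp (Complex.I * (t k : ℂ) * ((c g k : ℝ) : ℂ)))
          ∂(Measure.pi fun _ : Fin (m+1) => μ1)
        = ∏ k : Fin (m+1), Complex.exp (-((v:ℂ)/2) * ((c g k : ℝ) : ℂ)^2) := by
    intro g
    rw [gcm_pi_fubini μ1 (fun k x => Complex.exp (Complex.I * (x : ℂ) * ((c g k : ℝ) : ℂ)))]
    apply Finset.prod_congr rfl
    intro k _
    exact gcm_gauss_char v hv (c g k)
  simp_rw [hstep]
  -- Right-hand side
  rw [gcm_trace_pow]
  have hKg : ∀ g : Fin (m+1) → Fin d,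
      (∏ k : Fin (m+1), Complex.exp (-((v:ℂ)/2) * ((c g k : ℝ) : ℂ)^2))
        = ∏ k : Fin (m+1), (Matrix.of fun i j : Fin d =>
            (Real.exp (-(v / 2) * (ε i - ε j) ^ 2) : ℂ)) (g k) (g (finRotate (m+1) k)) := by
    intro g
    rw [← Equiv.prod_comp σ (fun k => Complex.exp (-((v:ℂ)/2) * ((c g k : ℝ) : ℂ)^2))]
    apply Finset.prod_congr rfl
    intro k _
    rw [Matrix.of_apply, Complex.ofReal_exp]
    congr 1
    rw [hc]
    simp only [Equiv.symm_apply_apply]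
    push_cast
    rw [← hσ]
    ring
  simp_rw [hKg]
  rw [one_div, one_div, inv_pow]
end
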